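/- arXiv:2601.08677 — 5 statements merged into one kernel-verified Lean document; each statement's English description precedes it below -/
import Mathlib

section
/- Let K be an admissible kernel and let g ∈ L^∞(ℝⁿ) be ℤⁿ-periodic with ∫_Q g(x) dx = 0. Then for every measurable set F ⊆ ℝⁿ one has ∬_{Q×Q} χ_F(x) χ_{F^c}(y) K(x,y) dx dy + ∫_{Q∩F} g(x) dx ≥ (κ₃/2 − ‖g‖_{L^∞(ℝⁿ)}) · min{ |F ∩ Q|, |F^c ∩ Q| }. -/
open MeasureTheory ENNReal Filter Metric
open scoped RealInnerProductSpace Pointwise Topology NNReal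

noncomputable section

abbrev Euc (n : ℕ) := EuclideanSpace ℝ (Fin n)

/-- The open unit cube `(0,1)^n` in `ℝⁿ`. -/
def Qcube (n : ℕ) : Set (Euc n) := {x | ∀ i, x i ∈ Set.Ioo (0 : ℝ) 1}

/-- The centered open unit cube `(-1/2,1/2)^n` in `ℝⁿ`. -/
def QcubeC (n : ℕ) : Set (Euc n) := {x | ∀ i, x i ∈ Set.Ioo (-(1 : ℝ) / 2) (1 / 2)}

/-- The vector of `ℝⁿ` with integer coordinates given by `k : ℤⁿ`. -/
def intVec {n : ℕ} (k : Fin n → ℤ) : Euc n :=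
  (WithLp.equiv 2 (Fin n → ℝ)).symm fun i => (k i : ℝ)

/-- `ℤⁿ`-periodicity of a function on `ℝⁿ`. -/
def ZPeriodic {n : ℕ} (f : Euc n → ℝ) : Prop :=
  ∀ (k : Fin n → ℤ) (x : Euc n), f (x + intVec k) = f x

/-- An admissible kernel: nonnegative, symmetric, translation and rotation invariant,
with first-moment integrability, the two-sided fractional bounds, and a positive
lower bound on `Q × Q`. -/
structure IsAdmissibleKernel (n : ℕ) (s₁ s₂ δ κ₁ κ₂ κ₃ : ℝ)
    (K : Euc n → Euc n → ℝ) : Prop where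
  nonneg : ∀ x y, 0 ≤ K x y
  symm : ∀ x y, K x y = K y x
  transl : ∀ x y w, K (x + w) (y + w) = K x y
  rot : ∀ (R : Euc n ≃ₗᵢ[ℝ] Euc n) (x y : Euc n), K (R x) (R y) = K x y
  int_fin : (∫⁻ h : Euc n, ENNReal.ofReal (‖h‖ * K h 0)) < ⊤
  s₁_pos : 0 < s₁
  s₁_lt : s₁ < 1 / 2
  s₂_gt : 1 / 2 < s₂
  s₂_lt : s₂ < 1
  δ_pos : 0 < δ
  κ₁_pos : 0 < κ₁
  κ₂_pos : 0 < κ₂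
  κ₃_pos : 0 < κ₃
  κ₁_le_κ₂ : κ₁ ≤ κ₂
  lower : ∀ x y : Euc n, 0 < ‖x - y‖ → ‖x - y‖ < δ →
    κ₁ / ‖x - y‖ ^ ((n : ℝ) + 2 * s₁) ≤ K x y
  upper : ∀ x y : Euc n, x ≠ y →
    K x y ≤ κ₂ * min (1 / ‖x - y‖ ^ ((n : ℝ) + 2 * s₁)) (1 / ‖x - y‖ ^ ((n : ℝ) + 2 * s₂))
  lowerQ : ∀ x ∈ Qcube n, ∀ y ∈ Qcube n, κ₃ ≤ K x y

/-- The class `𝒲` of locally integrable, `ℤⁿ`-periodic functions with zero average on `Q`. -/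
def MemW {n : ℕ} (u : Euc n → ℝ) : Prop :=
  MeasureTheory.LocallyIntegrable u volume ∧ ZPeriodic u ∧ (∫ x in Qcube n, u x) = 0

/-- The cell energy `𝔈ₚ(u)`, valued in `EReal`. -/
def cellEnergy {n : ℕ} (K : Euc n → Euc n → ℝ) (g : Euc n → ℝ) (p : Euc n)
    (u : Euc n → ℝ) : EReal :=
  ((∫⁻ x in Qcube n, ∫⁻ y : Euc n,
      ENNReal.ofReal (|u x - u y + ⟪p, x - y⟫| / 2 * K x y) : ℝ≥0∞) : EReal)
    + (((∫ x in Qcube n, g x * u x) : ℝ) : EReal)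

/-- `u` is a minimizer of the cell energy `𝔈ₚ` over `𝒲`. -/
def IsCellMinimizer {n : ℕ} (K : Euc n → Euc n → ℝ) (g : Euc n → ℝ) (p : Euc n)
    (u : Euc n → ℝ) : Prop :=
  MemW u ∧ ∀ w : Euc n → ℝ, MemW w → cellEnergy K g p u ≤ cellEnergy K g p w

/-- Real-valued indicator function of a set. -/
def setInd {n : ℕ} (E : Set (Euc n)) (x : Euc n) : ℝ := Set.indicator E (fun _ => (1 : ℝ)) x

/-- `Ω_♯ = (Ω×Ω) ∪ (Ωᶜ×Ω) ∪ (Ω×Ωᶜ)`. -/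
def sharpSet {n : ℕ} (Ω : Set (Euc n)) : Set (Euc n × Euc n) :=
  (Ω ×ˢ Ω) ∪ (Ωᶜ ×ˢ Ω) ∪ (Ω ×ˢ Ωᶜ)

/-- The `K`-nonlocal perimeter of `E` relative to `Ω`. -/
def perK {n : ℕ} (K : Euc n → Euc n → ℝ) (E Ω : Set (Euc n)) : ℝ≥0∞ :=
  ∫⁻ q in sharpSet Ω, ENNReal.ofReal (|setInd E q.1 - setInd E q.2| / 2 * K q.1 q.2)

/-- The functional `J(E,Ω) = P_K(E,Ω) + ∫_{E∩Ω} g`. -/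
def energyJ {n : ℕ} (K : Euc n → Euc n → ℝ) (g : Euc n → ℝ) (E Ω : Set (Euc n)) : EReal :=
  (perK K E Ω : EReal) + (((∫ x in E ∩ Ω, g x) : ℝ) : EReal)

/-- Class-A minimality for `J`. -/
def IsClassAMinimizer {n : ℕ} (K : Euc n → Euc n → ℝ) (g : Euc n → ℝ)
    (E : Set (Euc n)) : Prop :=
  ∀ Ω : Set (Euc n), IsOpen Ω → Bornology.IsBounded Ω →
    ∀ F : Set (Euc n), MeasurableSet F → F \ Ω = E \ Ω →
      energyJ K g E Ω ≤ energyJ K g F Ω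

/-- Integer translate `k + Q` of the unit cube. -/
def cubeTrans {n : ℕ} (k : Fin n → ℤ) : Set (Euc n) := (fun x => x + intVec k) '' Qcube n

/-- `𝒬(Ω)₁`: the union of the integer translates of the unit cube contained in `Ω`. -/
def unitCubes (n : ℕ) (Ω : Set (Euc n)) : Set (Euc n) :=
  ⋃ k ∈ {k : Fin n → ℤ | cubeTrans k ⊆ Ω}, cubeTrans k

/-- The functional `ℱ(E,Ω) = P_K(E,Ω) + ∫_{E∩𝒬(Ω)₁} g`. -/
def energyF {n : ℕ} (K : Euc n → Euc n → ℝ) (g : Euc n → ℝ) (E Ω : Set (Euc n)) : EReal :=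
  (perK K E Ω : EReal) + (((∫ x in E ∩ unitCubes n Ω, g x) : ℝ) : EReal)

/-- Rescaled kernel `K_ε(x,y) = ε^{-n-1} K(x/ε, y/ε)`. -/
def Keps {n : ℕ} (K : Euc n → Euc n → ℝ) (ε : ℝ) : Euc n → Euc n → ℝ :=
  fun x y => ε ^ (-(n : ℝ) - 1) * K (ε⁻¹ • x) (ε⁻¹ • y)

/-- Rescaled forcing term `g_ε(x) = ε⁻¹ g(x/ε)`. -/
def geps {n : ℕ} (g : Euc n → ℝ) (ε : ℝ) : Euc n → ℝ := fun x => ε⁻¹ * g (ε⁻¹ • x)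

/-- The rescaled cube `ε(k + Q)`. -/
def cubeTransEps {n : ℕ} (ε : ℝ) (k : Fin n → ℤ) : Set (Euc n) :=
  (fun x => ε • (x + intVec k)) '' Qcube n

/-- `𝒬(Ω)_ε`: the union of the cubes `ε(k+Q)` contained in `Ω`. -/
def unitCubesEps (n : ℕ) (ε : ℝ) (Ω : Set (Euc n)) : Set (Euc n) :=
  ⋃ k ∈ {k : Fin n → ℤ | cubeTransEps ε k ⊆ Ω}, cubeTransEps ε k

/-- The rescaled functional `ℱ_ε(E,Ω) = P_{K_ε}(E,Ω) + ∫_{𝒬(Ω)_ε ∩ E} g_ε`. -/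
def energyFeps {n : ℕ} (K : Euc n → Euc n → ℝ) (g : Euc n → ℝ) (ε : ℝ)
    (E Ω : Set (Euc n)) : EReal :=
  (perK (Keps K ε) E Ω : EReal) + (((∫ x in unitCubesEps n ε Ω ∩ E, geps g ε x) : ℝ) : EReal)

/-- A planelike minimizer for `J` in direction `p` (a unit vector), with width `M`. -/
def IsPlanelike {n : ℕ} (K : Euc n → Euc n → ℝ) (g : Euc n → ℝ) (p : Euc n) (M : ℝ)
    (E : Set (Euc n)) : Prop :=
  IsClassAMinimizer K g E ∧
    (({x : Euc n | ⟪x, p⟫ ≤ -M} ⊆ E ∧ E ⊆ {x : Euc n | ⟪x, p⟫ ≤ M}) ∨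
      ({x : Euc n | M ≤ ⟪x, p⟫} ⊆ E ∧ E ⊆ {x : Euc n | -M ≤ ⟪x, p⟫}))

/-- An open set has Lipschitz boundary: near every boundary point, after choosing a unit
direction `ν`, the set coincides locally with the subgraph of a Lipschitz function of the
tangential component. -/
def HasLipschitzBoundary {n : ℕ} (Ω : Set (Euc n)) : Prop :=
  ∀ x₀ ∈ frontier Ω, ∃ ν : Euc n, ‖ν‖ = 1 ∧
    ∃ r : ℝ, 0 < r ∧ ∃ (L : ℝ≥0) (φ : Euc n → ℝ), LipschitzWith L φ ∧
      ∀ x ∈ Metric.ball x₀ r,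
        (x ∈ Ω ↔ ⟪x - x₀, ν⟫ < φ (x - x₀ - ⟪x - x₀, ν⟫ • ν))

/-- The essential oscillation over the unit cube `Q`. -/
def oscQ {n : ℕ} (φ : Euc n → ℝ) : ℝ :=
  essSup φ (volume.restrict (Qcube n)) - essInf φ (volume.restrict (Qcube n))

/-- `(Λ,ξ)`-minimality for the perimeter `P_K` in `Ω`. -/
def IsAlmostMinimal {n : ℕ} (K : Euc n → Euc n → ℝ) (Λ ξ : ℝ) (E Ω : Set (Euc n)) : Prop :=
  ∀ F : Set (Euc n), MeasurableSet F → F \ Ω = E \ Ω →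
    perK K E Ω ≤ perK K F Ω + ENNReal.ofReal Λ * volume (symmDiff E F) ^ (1 - ξ)

/-- The slab `A_{L₁,L₂,R}` around the hyperplane orthogonal to `p`. -/
def slabA {n : ℕ} (p : Euc n) (L₁ L₂ R : ℝ) : Set (Euc n) :=
  {x | L₁ < |⟪x, p⟫| ∧ |⟪x, p⟫| < L₂ ∧ ‖x - ⟪x, p⟫ • p‖ < R}


/-- The standing assumptions on the forcing term `g`: bounded (in `L^∞`),
`ℤⁿ`-periodic and with zero average on the unit cube. -/
def GoodForcing {n : ℕ} (g : Euc n → ℝ) : Prop :=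
  MeasureTheory.MemLp g ⊤ (volume : Measure (Euc n)) ∧ ZPeriodic g ∧
    (∫ x in Qcube n, g x) = 0


lemma measQcube (n : ℕ) : MeasurableSet (Qcube n) := by
  have h : Qcube n = ⋂ i, (fun x : Euc n => x i) ⁻¹' Set.Ioo (0:ℝ) 1 := by
    ext x; simp [Qcube]
  rw [h]
  exact MeasurableSet.iInter fun i =>
    ((continuous_apply i).comp (PiLp.continuous_ofLp ..)).measurable measurableSet_Ioo

lemma volQcube (n : ℕ) : volume (Qcube n) = 1 := by
  have h : Qcube n = (MeasurableEquiv.toLp 2 (Fin n → ℝ)).symm ⁻¹'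
      (Set.univ.pi fun _ => Set.Ioo (0:ℝ) 1) := by
    ext x; simp [Qcube]
  rw [h, (EuclideanSpace.volume_preserving_symm_measurableEquiv_toLp (Fin n)).measure_preimage
    (MeasurableSet.univ_pi fun _ => measurableSet_Ioo).nullMeasurableSet]
  rw [volume_pi_pi]; simp [Real.volume_Ioo]

/-- Energy lower bound on the unit cube. -/
theorem energy_lower_bound_on_unit_cube
    (n : ℕ) (hn : 1 ≤ n) (s₁ s₂ δ κ₁ κ₂ κ₃ : ℝ)
    (K : Euc n → Euc n → ℝ) (hK : IsAdmissibleKernel n s₁ s₂ δ κ₁ κ₂ κ₃ K)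
    (g : Euc n → ℝ) (hg : GoodForcing g)
    (F : Set (Euc n)) (hF : MeasurableSet F) :
    (((κ₃ / 2 - (eLpNorm g ⊤ (volume : Measure (Euc n))).toReal)
        * min (volume (F ∩ Qcube n)).toReal (volume (Fᶜ ∩ Qcube n)).toReal : ℝ) : EReal)
      ≤ ((∫⁻ x in F ∩ Qcube n, ∫⁻ y in Fᶜ ∩ Qcube n, ENNReal.ofReal (K x y)) : EReal)
        + (((∫ x in Qcube n ∩ F, g x) : ℝ) : EReal) := by
  obtain ⟨hgL, hgP, hg0⟩ := hg
  set Q := Qcube n with hQ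
  have hQm : MeasurableSet Q := measQcube n
  have hQv : volume Q = 1 := volQcube n
  have hFQ : volume (F ∩ Q) ≠ ⊤ :=
    ne_top_of_le_ne_top (by simp [hQv]) (measure_mono Set.inter_subset_right)
  have hFcQ : volume (Fᶜ ∩ Q) ≠ ⊤ :=
    ne_top_of_le_ne_top (by simp [hQv]) (measure_mono Set.inter_subset_right)
  set a := (volume (F ∩ Q)).toReal with haa
  set b := (volume (Fᶜ ∩ Q)).toReal with hbb
  have ha : 0 ≤ a := ENNReal.toReal_nonneg
  have hb : 0 ≤ b := ENNReal.toReal_nonneg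
  have hab : a + b = 1 := by
    have h1 : volume (F ∩ Q) + volume (Fᶜ ∩ Q) = 1 := by
      rw [Set.inter_comm F Q, Set.inter_comm Fᶜ Q, ← Set.diff_eq,
        measure_inter_add_diff Q hF, hQv]
    have h2 := congrArg ENNReal.toReal h1
    rwa [ENNReal.toReal_add hFQ hFcQ] at h2
  have hκ₃ := hK.κ₃_pos
  -- kernel lower bound
  have hI : ENNReal.ofReal (κ₃ * b * a)
      ≤ ∫⁻ x in F ∩ Q, ∫⁻ y in Fᶜ ∩ Q, ENNReal.ofReal (K x y) := by
    have hC : ENNReal.ofReal (κ₃ * b * a)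
        = (ENNReal.ofReal κ₃ * volume (Fᶜ ∩ Q)) * volume (F ∩ Q) := by
      rw [ENNReal.ofReal_mul (by positivity), ENNReal.ofReal_mul hκ₃.le,
        haa, hbb, ENNReal.ofReal_toReal hFcQ, ENNReal.ofReal_toReal hFQ]
    rw [hC, ← setLIntegral_const (F ∩ Q) (ENNReal.ofReal κ₃ * volume (Fᶜ ∩ Q))]
    refine setLIntegral_mono' (hF.inter hQm) fun x hx => ?_
    rw [← setLIntegral_const (Fᶜ ∩ Q) (ENNReal.ofReal κ₃)]
    refine setLIntegral_mono' (hF.compl.inter hQm) fun y hy => ?_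
    exact ENNReal.ofReal_le_ofReal (hK.lowerQ x hx.2 y hy.2)
  -- forcing bound
  set Cg := (eLpNorm g ⊤ (volume : Measure (Euc n))).toReal with hCg
  have hCg0 : 0 ≤ Cg := ENNReal.toReal_nonneg
  have hae : ∀ᵐ x ∂(volume : Measure (Euc n)), ‖g x‖ ≤ Cg := by
    filter_upwards [ae_le_eLpNormEssSup (f := g) (μ := (volume : Measure (Euc n)))] with x hx
    have hfin : eLpNormEssSup g (volume : Measure (Euc n)) ≠ ⊤ := by
      rw [← eLpNorm_exponent_top]; exact hgL.2.ne
    have h3 := ENNReal.toReal_mono hfin hx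
    simpa [hCg, eLpNorm_exponent_top] using h3
  have hint : IntegrableOn g Q volume := by
    haveI : IsFiniteMeasure (volume.restrict Q) :=
      ⟨by rw [Measure.restrict_apply_univ]; simp [hQv]⟩
    exact (hgL.restrict Q).integrable le_top
  have habs : ∀ S : Set (Euc n), volume S ≠ ⊤ →
      |∫ x in S, g x| ≤ Cg * (volume S).toReal := by
    intro S hS
    have h4 := norm_setIntegral_le_of_norm_le_const_ae (C := Cg) (s := S)
      (lt_top_iff_ne_top.2 hS) (ae_restrict_of_ae hae)
    simpa [Real.norm_eq_abs, Measure.real] using h4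
  set c := ∫ x in Q ∩ F, g x with hc
  have hQF : Q ∩ F = F ∩ Q := Set.inter_comm _ _
  have hQFc : Q \ F = Fᶜ ∩ Q := by rw [Set.diff_eq, Set.inter_comm]
  have hg1 : -(Cg * a) ≤ c := by
    have := (abs_le.1 (habs (F ∩ Q) hFQ)).1
    rw [hc, hQF]; linarith
  have hg2 : -(Cg * b) ≤ c := by
    have hsplit : (∫ x in Q ∩ F, g x) + (∫ x in Q \ F, g x) = ∫ x in Q, g x :=
      integral_inter_add_diff hF hint
    rw [hg0] at hsplit
    have hvol : (volume (Q \ F)).toReal = b := by rw [hQFc]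
    have h6 := (abs_le.1 (habs (Q \ F) (by rw [hQFc]; exact hFcQ))).2
    rw [hvol] at h6
    rw [hc]; linarith
  have hcmin : -(Cg * min a b) ≤ c := by
    rcases le_total a b with h | h
    · rw [min_eq_left h]; exact hg1
    · rw [min_eq_right h]; exact hg2
  -- the real inequality
  have hreal : (κ₃ / 2 - Cg) * min a b ≤ κ₃ * b * a + c := by
    rcases le_total a b with h | h
    · rw [min_eq_left h] at hcmin ⊢
      nlinarith [mul_nonneg hκ₃.le (mul_nonneg ha (by linarith : (0:ℝ) ≤ b - 1/2))]
    · rw [min_eq_right h] at hcmin ⊢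
      nlinarith [mul_nonneg hκ₃.le (mul_nonneg hb (by linarith : (0:ℝ) ≤ a - 1/2))]
  -- assemble in EReal
  have hIE : ((κ₃ * b * a : ℝ) : EReal)
      ≤ ((∫⁻ x in F ∩ Q, ∫⁻ y in Fᶜ ∩ Q, ENNReal.ofReal (K x y) : ℝ≥0∞) : EReal) := by
    have h5 := EReal.coe_ennreal_le_coe_ennreal_iff.2 hI
    rwa [EReal.coe_ennreal_ofReal, max_eq_left (by positivity)] at h5
  calc (((κ₃ / 2 - Cg) * min a b : ℝ) : EReal)
      ≤ ((κ₃ * b * a + c : ℝ) : EReal) := EReal.coe_le_coe_iff.2 hreal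
    _ = ((κ₃ * b * a : ℝ) : EReal) + ((c : ℝ) : EReal) := EReal.coe_add _ _
    _ ≤ _ + ((c : ℝ) : EReal) := add_le_add_left hIE _

end
end

section
/- Let K be an admissible kernel and let g ∈ L^∞(ℝⁿ) be ℤⁿ-periodic with ∫_Q g(x) dx = 0 and ‖g‖_{L^∞(ℝⁿ)} ≤ κ₃/2. Then for every measurable set F ⊆ ℝⁿ and every R > 1 one has 𝔈(F, B_R) := ∬_{B_R×ℝⁿ} χ_F(x) χ_{F^c}(y) K(x,y) dx dy + ∫_{𝒬(B_R)₁ ∩ F} g(x) dx ≥ 0. -/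
open MeasureTheory ENNReal Filter Metric
open scoped RealInnerProductSpace Pointwise Topology NNReal

noncomputable section

section EnergyAux

open MeasureTheory

variable {n : ℕ}

lemma mem_Qcube_iff {x : Euc n} : x ∈ Qcube n ↔ ∀ i, 0 < x i ∧ x i < 1 := by
  simp [Qcube, Set.mem_Ioo]

lemma measurableSet_Qcube : MeasurableSet (Qcube n) := by
  have h : Qcube n = ⋂ i, (fun x : Euc n => x i) ⁻¹' Set.Ioo (0:ℝ) 1 := by
    ext x; simp [Qcube, Set.mem_iInter]
  rw [h]
  have hm : ∀ i : Fin n, Measurable fun x : Euc n => x i := fun i =>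
    (measurable_pi_apply i).comp (MeasurableEquiv.toLp 2 (Fin n → ℝ)).symm.measurable
  exact MeasurableSet.iInter fun i => (hm i) measurableSet_Ioo

lemma volume_Qcube : volume (Qcube n) = 1 := by
  have hQ : Qcube n
      = (MeasurableEquiv.toLp 2 (Fin n → ℝ)).symm ⁻¹' (Set.univ.pi fun _ => Set.Ioo (0:ℝ) 1) := by
    ext x
    simp only [Set.mem_preimage, Set.mem_pi, Set.mem_univ, forall_true_left, Set.mem_Ioo]
    exact mem_Qcube_iff
  rw [hQ, (EuclideanSpace.volume_preserving_symm_measurableEquiv_toLp (Fin n)).measure_preimage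
    (MeasurableSet.univ_pi fun _ => measurableSet_Ioo).nullMeasurableSet, volume_pi_pi]
  simp

lemma mem_cubeTrans {k : Fin n → ℤ} {x : Euc n} :
    x ∈ cubeTrans k ↔ ∀ i, (k i : ℝ) < x i ∧ x i < k i + 1 := by
  constructor
  · rintro ⟨y, hy, rfl⟩ i
    have h := mem_Qcube_iff.mp hy i
    have h1 : ((fun x : Euc n => x + intVec k) y) i = y i + (k i : ℝ) := rfl
    rw [h1]
    exact ⟨by linarith [h.1], by linarith [h.2]⟩
  · intro h
    refine ⟨x - intVec k, mem_Qcube_iff.mpr fun i => ?_, by simp⟩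
    have h1 : (x - intVec k) i = x i - (k i : ℝ) := rfl
    have := h i
    rw [h1]
    exact ⟨by linarith [this.1], by linarith [this.2]⟩

lemma sub_intVec_mem_Qcube {k : Fin n → ℤ} {x : Euc n} (hx : x ∈ cubeTrans k) :
    x - intVec k ∈ Qcube n := by
  refine mem_Qcube_iff.mpr fun i => ?_
  have h := mem_cubeTrans.mp hx i
  have h1 : (x - intVec k) i = x i - (k i : ℝ) := rfl
  rw [h1]
  exact ⟨by linarith [h.1], by linarith [h.2]⟩

lemma measurableSet_cubeTrans (k : Fin n → ℤ) : MeasurableSet (cubeTrans k) := by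
  have h : cubeTrans k
      = ⋂ i, (fun x : Euc n => x i) ⁻¹' Set.Ioo ((k i : ℝ)) ((k i : ℝ) + 1) := by
    ext x
    simp only [Set.mem_iInter, Set.mem_preimage, Set.mem_Ioo]
    exact mem_cubeTrans
  rw [h]
  have hm : ∀ i : Fin n, Measurable fun x : Euc n => x i := fun i =>
    (measurable_pi_apply i).comp (MeasurableEquiv.toLp 2 (Fin n → ℝ)).symm.measurable
  exact MeasurableSet.iInter fun i => (hm i) measurableSet_Ioo

lemma preimage_add_cubeTrans (k : Fin n → ℤ) :
    (fun x : Euc n => x + intVec k) ⁻¹' cubeTrans k = Qcube n := by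
  ext x
  rw [Set.mem_preimage, mem_cubeTrans, mem_Qcube_iff]
  have h1 : ∀ i, (x + intVec k) i = x i + (k i : ℝ) := fun i => rfl
  constructor
  · intro h i
    have := h i; rw [h1 i] at this
    exact ⟨by linarith [this.1], by linarith [this.2]⟩
  · intro h i
    have := h i; rw [h1 i]
    exact ⟨by linarith [this.1], by linarith [this.2]⟩

lemma volume_cubeTrans (k : Fin n → ℤ) : volume (cubeTrans k) = 1 := by
  have h := (measurePreserving_add_right (volume : Measure (Euc n)) (intVec k)).measure_preimage
    (measurableSet_cubeTrans k).nullMeasurableSet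
  rw [preimage_add_cubeTrans k, volume_Qcube] at h
  exact h.symm

lemma cubeTrans_disjoint {k k' : Fin n → ℤ} (h : k ≠ k') :
    Disjoint (cubeTrans k) (cubeTrans k') := by
  rw [Set.disjoint_left]
  intro x hx hx'
  apply h
  funext i
  have h1 := mem_cubeTrans.mp hx i
  have h2 := mem_cubeTrans.mp hx' i
  have a1 : k i ≤ k' i := by
    have : (k i : ℝ) < (k' i : ℝ) + 1 := h1.1.trans h2.2
    exact_mod_cast Int.lt_add_one_iff.mp (by exact_mod_cast this)
  have a2 : k' i ≤ k i := by
    have : (k' i : ℝ) < (k i : ℝ) + 1 := h2.1.trans h1.2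
    exact_mod_cast Int.lt_add_one_iff.mp (by exact_mod_cast this)
  exact le_antisymm a1 a2

lemma setIntegral_cubeTrans (g : Euc n → ℝ) (hgp : ZPeriodic g) (k : Fin n → ℤ) :
    ∫ x in cubeTrans k, g x = ∫ x in Qcube n, g x := by
  have hmp : MeasurePreserving (fun x : Euc n => x + intVec k) volume volume :=
    measurePreserving_add_right volume (intVec k)
  have e := MeasurableEquiv.addRight (intVec k)
  calc ∫ x in cubeTrans k, g x
      = ∫ x in cubeTrans k, g x ∂(Measure.map (MeasurableEquiv.addRight (intVec k)) volume) := by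
        rw [show Measure.map (MeasurableEquiv.addRight (intVec k)) (volume : Measure (Euc n))
          = volume from hmp.map_eq]
    _ = ∫ x in (MeasurableEquiv.addRight (intVec k)) ⁻¹' cubeTrans k,
          g ((MeasurableEquiv.addRight (intVec k)) x) := setIntegral_map_equiv _ _ _
    _ = ∫ x in Qcube n, g x := by
        rw [show (MeasurableEquiv.addRight (intVec k)) ⁻¹' cubeTrans k = Qcube n from
          preimage_add_cubeTrans k]
        refine setIntegral_congr_fun measurableSet_Qcube fun x _ => ?_
        exact hgp k x

end EnergyAux

/-- The energy `𝔈(F, B_R)` is nonnegative in every large ball. -/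
theorem energy_nonneg_in_large_balls
    (n : ℕ) (hn : 1 ≤ n) (s₁ s₂ δ κ₁ κ₂ κ₃ : ℝ)
    (K : Euc n → Euc n → ℝ) (hK : IsAdmissibleKernel n s₁ s₂ δ κ₁ κ₂ κ₃ K)
    (g : Euc n → ℝ) (hg : GoodForcing g)
    (hgsmall : eLpNorm g ⊤ (volume : Measure (Euc n)) ≤ ENNReal.ofReal (κ₃ / 2))
    (F : Set (Euc n)) (hF : MeasurableSet F) (R : ℝ) (hR : 1 < R) :
    (0 : EReal)
      ≤ ((∫⁻ x in F ∩ Metric.ball (0 : Euc n) R, ∫⁻ y in Fᶜ,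
            ENNReal.ofReal (K x y)) : EReal)
        + (((∫ x in unitCubes n (Metric.ball (0 : Euc n) R) ∩ F, g x) : ℝ) : EReal) := by
  classical
  obtain ⟨hgmem, hgper, hgzero⟩ := hg
  have hκ : (0:ℝ) < κ₃ := hK.κ₃_pos
  set Ω : Set (Euc n) := Metric.ball (0 : Euc n) R with hΩ
  set S : Set (Fin n → ℤ) := {k : Fin n → ℤ | cubeTrans k ⊆ Ω} with hSdef
  set c : S → Set (Euc n) := fun k => cubeTrans k.1 with hcdef
  have hcm : ∀ k : S, MeasurableSet (c k) := fun k => measurableSet_cubeTrans _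
  have hcvol : ∀ k : S, volume (c k) = 1 := fun k => volume_cubeTrans _
  have hdisj : Pairwise (Function.onFun Disjoint fun k : S => F ∩ c k) := by
    intro k k' hkk'
    exact Set.disjoint_of_subset Set.inter_subset_right Set.inter_subset_right
      (cubeTrans_disjoint fun h => hkk' (Subtype.ext h))
  -- the union of cubes
  have hU : unitCubes n Ω ∩ F = ⋃ k : S, (F ∩ c k) := by
    rw [unitCubes, Set.biUnion_eq_iUnion, Set.inter_comm, Set.inter_iUnion]
  have hUsub : unitCubes n Ω ⊆ Ω := Set.iUnion₂_subset fun k hk => hk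
  -- finiteness of measures
  have hfin1 : ∀ k : S, volume (F ∩ c k) ≠ ⊤ := fun k =>
    (lt_of_le_of_lt (measure_mono Set.inter_subset_right) (by rw [hcvol k]; exact one_lt_top)).ne
  have hfin2 : ∀ k : S, volume (c k \ F) ≠ ⊤ := fun k =>
    (lt_of_le_of_lt (measure_mono Set.diff_subset) (by rw [hcvol k]; exact one_lt_top)).ne
  set a : S → ℝ := fun k => (volume (F ∩ c k)).toReal with hadef
  set b : S → ℝ := fun k => (volume (c k \ F)).toReal with hbdef
  have ha0 : ∀ k, 0 ≤ a k := fun k => ENNReal.toReal_nonneg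
  have hb0 : ∀ k, 0 ≤ b k := fun k => ENNReal.toReal_nonneg
  have hab : ∀ k, a k + b k = 1 := by
    intro k
    have h := measure_inter_add_diff (μ := volume) (c k) hF
    rw [Set.inter_comm, hcvol k] at h
    have := congrArg ENNReal.toReal h
    rwa [ENNReal.toReal_add (hfin1 k) (hfin2 k), ENNReal.toReal_one] at this
  -- a.e. bound on g
  have hgae : ∀ᵐ x : Euc n, ‖g x‖ ≤ κ₃ / 2 := by
    filter_upwards [enorm_ae_le_eLpNormEssSup g volume] with x hx
    have h1 : (‖g x‖₊ : ℝ≥0∞) ≤ ENNReal.ofReal (κ₃ / 2) :=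
      hx.trans (by rwa [← eLpNorm_exponent_top])
    have h2 := ENNReal.toReal_mono ENNReal.ofReal_ne_top h1
    rwa [ENNReal.toReal_ofReal (by linarith), ENNReal.coe_toReal, coe_nnnorm] at h2
  -- integrability on finite-measure sets
  have hint : ∀ s : Set (Euc n), volume s ≠ ⊤ → IntegrableOn g s volume := by
    intro s hs
    haveI : IsFiniteMeasure (volume.restrict s) :=
      ⟨by rw [Measure.restrict_apply_univ]; exact lt_top_iff_ne_top.mpr hs⟩
    exact (hgmem.restrict s).integrable le_top
  -- the union has finite measure
  have hUfin : volume (unitCubes n Ω ∩ F) ≠ ⊤ :=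
    (lt_of_le_of_lt (measure_mono fun x hx => hUsub hx.1) measure_ball_lt_top).ne
  -- per-cube integrals
  set I : S → ℝ := fun k => ∫ x in F ∩ c k, g x with hIdef
  have hcube0 : ∀ k : S, ∫ x in c k, g x = 0 := by
    intro k
    rw [hcdef]
    rw [setIntegral_cubeTrans g hgper]
    exact hgzero
  have hI2 : ∀ k : S, ∫ x in c k \ F, g x = - I k := by
    intro k
    have h := integral_inter_add_diff (μ := volume) (s := c k) (t := F) (f := g) hF
      (hint _ (by rw [hcvol k]; exact one_ne_top))
    rw [hcube0 k, Set.inter_comm] at h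
    have : I k = ∫ x in F ∩ c k, g x := rfl
    linarith
  -- per-cube bound
  have hIb : ∀ k : S, |I k| ≤ κ₃ * (a k * b k) := by
    intro k
    have hb1 : ‖I k‖ ≤ (κ₃ / 2) * a k :=
      norm_setIntegral_le_of_norm_le_const_ae (lt_top_iff_ne_top.mpr (hfin1 k))
        (ae_restrict_of_ae hgae)
    have hb2' : ‖∫ x in c k \ F, g x‖ ≤ (κ₃ / 2) * b k :=
      norm_setIntegral_le_of_norm_le_const_ae (lt_top_iff_ne_top.mpr (hfin2 k))
        (ae_restrict_of_ae hgae)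
    have hb2 : |I k| ≤ (κ₃ / 2) * b k := by
      rw [hI2 k, Real.norm_eq_abs, abs_neg] at hb2'
      exact hb2'
    rw [Real.norm_eq_abs] at hb1
    rcases le_total (a k) (b k) with h | h
    · have hge : 0 ≤ κ₃ * (a k * b k) - κ₃ / 2 * a k := by
        have he : κ₃ * (a k * b k) - κ₃ / 2 * a k
            = κ₃ / 2 * (a k * (b k - a k)) + κ₃ / 2 * (a k * (a k + b k - 1)) := by ring
        have h2 : a k + b k - 1 = 0 := by linarith [hab k]
        rw [he, h2]
        have h1 : 0 ≤ κ₃ / 2 * (a k * (b k - a k)) :=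
          mul_nonneg (by linarith) (mul_nonneg (ha0 k) (by linarith))
        simpa using h1
      linarith
    · have hge : 0 ≤ κ₃ * (a k * b k) - κ₃ / 2 * b k := by
        have he : κ₃ * (a k * b k) - κ₃ / 2 * b k
            = κ₃ / 2 * (b k * (a k - b k)) + κ₃ / 2 * (b k * (a k + b k - 1)) := by ring
        have h2 : a k + b k - 1 = 0 := by linarith [hab k]
        rw [he, h2]
        have h1 : 0 ≤ κ₃ / 2 * (b k * (a k - b k)) :=
          mul_nonneg (by linarith) (mul_nonneg (hb0 k) (by linarith))
        simpa using h1
      linarith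
  -- kernel lower bound on each cube
  have hKlow : ∀ k : S, ∀ x ∈ c k, ∀ y ∈ c k, κ₃ ≤ K x y := by
    intro k x hx y hy
    have h1 := hK.lowerQ _ (sub_intVec_mem_Qcube hx) _ (sub_intVec_mem_Qcube hy)
    have h2 := hK.transl (x - intVec k.1) (y - intVec k.1) (intVec k.1)
    rw [sub_add_cancel, sub_add_cancel] at h2
    rw [h2]
    exact h1
  -- per-cube lintegral lower bound
  have hof : ∀ k : S, ENNReal.ofReal |I k|
      ≤ ∫⁻ x in F ∩ c k, ∫⁻ y in Fᶜ, ENNReal.ofReal (K x y) := by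
    intro k
    have hstep : ∀ x ∈ F ∩ c k,
        ENNReal.ofReal κ₃ * volume (c k \ F) ≤ ∫⁻ y in Fᶜ, ENNReal.ofReal (K x y) := by
      intro x hx
      calc ENNReal.ofReal κ₃ * volume (c k \ F)
          = ∫⁻ _ in c k \ F, ENNReal.ofReal κ₃ := (setLIntegral_const _ _).symm
        _ ≤ ∫⁻ y in c k \ F, ENNReal.ofReal (K x y) :=
            setLIntegral_mono' ((hcm k).diff hF) fun y hy =>
              ENNReal.ofReal_le_ofReal (hKlow k x hx.2 y hy.1)
        _ ≤ ∫⁻ y in Fᶜ, ENNReal.ofReal (K x y) :=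
            lintegral_mono_set fun y hy => hy.2
    calc ENNReal.ofReal |I k| ≤ ENNReal.ofReal (κ₃ * (a k * b k)) :=
        ENNReal.ofReal_le_ofReal (hIb k)
      _ = ENNReal.ofReal κ₃ * volume (c k \ F) * volume (F ∩ c k) := by
          rw [ENNReal.ofReal_mul hκ.le, ENNReal.ofReal_mul (ha0 k), hadef, hbdef,
            ENNReal.ofReal_toReal (hfin1 k), ENNReal.ofReal_toReal (hfin2 k)]
          ring
      _ = ∫⁻ _ in F ∩ c k, (ENNReal.ofReal κ₃ * volume (c k \ F)) :=
          (setLIntegral_const _ _).symm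
      _ ≤ ∫⁻ x in F ∩ c k, ∫⁻ y in Fᶜ, ENNReal.ofReal (K x y) :=
          setLIntegral_mono' (hF.inter (hcm k)) hstep
  -- sum the lintegral bounds
  have hsum_le : ∑' k : S, ENNReal.ofReal |I k|
      ≤ ∫⁻ x in F ∩ Ω, ∫⁻ y in Fᶜ, ENNReal.ofReal (K x y) := by
    calc ∑' k : S, ENNReal.ofReal |I k|
        ≤ ∑' k : S, ∫⁻ x in F ∩ c k, ∫⁻ y in Fᶜ, ENNReal.ofReal (K x y) :=
          ENNReal.tsum_le_tsum hof
      _ = ∫⁻ x in ⋃ k : S, (F ∩ c k), ∫⁻ y in Fᶜ, ENNReal.ofReal (K x y) :=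
          (lintegral_iUnion (fun k => hF.inter (hcm k)) hdisj _).symm
      _ ≤ ∫⁻ x in F ∩ Ω, ∫⁻ y in Fᶜ, ENNReal.ofReal (K x y) := by
          refine lintegral_mono_set ?_
          rw [← hU]
          exact fun x hx => ⟨hx.2, hUsub hx.1⟩
  -- the real integral as a sum
  have hHasSum : HasSum I (∫ x in unitCubes n Ω ∩ F, g x) := by
    rw [hU]
    exact hasSum_integral_iUnion (fun k => hF.inter (hcm k)) hdisj
      (by rw [← hU]; exact hint _ hUfin)
  set J : ℝ := ∫ x in unitCubes n Ω ∩ F, g x with hJdef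
  have hJ : J = ∑' k : S, I k := hHasSum.tsum_eq.symm
  have hsummable : Summable fun k : S => |I k| := hHasSum.summable.abs
  have hnorm : (fun k : S => ‖I k‖) = fun k : S => |I k| :=
    funext fun k => Real.norm_eq_abs _
  have habs : |J| ≤ ∑' k : S, |I k| := by
    have h0 : ‖∑' k : S, I k‖ ≤ ∑' k : S, ‖I k‖ :=
      norm_tsum_le_tsum_norm (by rw [hnorm]; exact hsummable)
    rw [hnorm] at h0
    rw [hJ, ← Real.norm_eq_abs (∑' k : S, I k)]
    exact h0
  set A : ℝ≥0∞ := ∫⁻ x in F ∩ Ω, ∫⁻ y in Fᶜ, ENNReal.ofReal (K x y) with hAdef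
  have hkey : ENNReal.ofReal (-J) ≤ A := by
    calc ENNReal.ofReal (-J) ≤ ENNReal.ofReal |J| :=
        ENNReal.ofReal_le_ofReal (neg_le_abs J)
      _ ≤ ENNReal.ofReal (∑' k : S, |I k|) := ENNReal.ofReal_le_ofReal habs
      _ = ∑' k : S, ENNReal.ofReal |I k| :=
          ENNReal.ofReal_tsum_of_nonneg (fun k => abs_nonneg _) hsummable
      _ ≤ A := hsum_le
  -- conclude in EReal
  by_cases hA : A = ⊤
  · rw [hA, EReal.coe_ennreal_top, EReal.top_add_of_ne_bot (EReal.coe_ne_bot J)]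
    exact le_top
  · have h1 : -J ≤ A.toReal := by
      rcases le_or_gt (-J) 0 with h | h
      · exact h.trans ENNReal.toReal_nonneg
      · have h2 := ENNReal.toReal_mono hA hkey
        rwa [ENNReal.toReal_ofReal h.le] at h2
    have h2 : (A : EReal) = ((A.toReal : ℝ) : EReal) := by
      rw [← EReal.toReal_coe_ennreal (x := A)]
      exact (EReal.coe_toReal (by simpa using hA) (EReal.coe_ennreal_ne_bot A)).symm
    rw [h2, ← EReal.coe_add]
    exact_mod_cast (by linarith : (0:ℝ) ≤ A.toReal + J)

end
end

section
/- Let K be an admissible kernel, let g ∈ L^∞(ℝⁿ) be ℤⁿ-periodic with ∫_Q g(x) dx = 0, let p ∈ S^{n−1}, and let E ⊆ ℝⁿ be a measurable set with ∂E ⊆ { x ∈ ℝⁿ : |x·p| ≤ M } for some M > 0. Let α ∈ (0, 2s₂ − 1). Then lim_{R→+∞} R^{1−n} ℱ(E, A_{R, R^{1+α}, R}) = 0, where A_{L₁,L₂,R} := { x ∈ ℝⁿ : L₁ < |x·p| < L₂ and |x − (x·p)p| < R }. -/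
open MeasureTheory ENNReal Filter Metric
open scoped RealInnerProductSpace Pointwise Topology NNReal

noncomputable section

namespace Vanish13

variable {n : ℕ}

lemma euc_add_apply (x y : Euc n) (i : Fin n) : (x + y) i = x i + y i := rfl

lemma intVec_apply (k : Fin n → ℤ) (i : Fin n) : intVec k i = (k i : ℝ) := rfl

lemma mem_Qcube {x : Euc n} : x ∈ Qcube n ↔ ∀ i, x i ∈ Set.Ioo (0:ℝ) 1 := Iff.rfl

lemma measurable_apply_euc (i : Fin n) : Measurable fun x : Euc n => x i :=
  by fun_prop

lemma convex_Qcube : Convex ℝ (Qcube n) := by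
  intro x hx y hy a b ha hb hab
  rw [mem_Qcube]
  intro i
  have h1 := hx i; have h2 := hy i
  rw [Set.mem_Ioo] at h1 h2
  have hco : (a • x + b • y) i = a * x i + b * y i := rfl
  rw [Set.mem_Ioo, hco]
  have e1 := mul_le_mul_of_nonneg_left (min_le_left (x i) (y i)) ha
  have e2 := mul_le_mul_of_nonneg_left (min_le_right (x i) (y i)) hb
  have e3 := mul_le_mul_of_nonneg_left (le_max_left (x i) (y i)) ha
  have e4 := mul_le_mul_of_nonneg_left (le_max_right (x i) (y i)) hb
  have hmin : (0:ℝ) < min (x i) (y i) := lt_min h1.1 h2.1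
  have hmax : max (x i) (y i) < 1 := max_lt h1.2 h2.2
  constructor
  · nlinarith
  · nlinarith

lemma mem_cubeTrans {k : Fin n → ℤ} {x : Euc n} :
    x ∈ cubeTrans k ↔ ∀ i, x i ∈ Set.Ioo ((k i : ℝ)) (k i + 1) := by
  constructor
  · rintro ⟨y, hy, rfl⟩ i
    have := hy i
    rw [Set.mem_Ioo] at this ⊢
    have hco : (fun x => x + intVec k) y i = y i + (k i : ℝ) := rfl
    rw [hco]
    constructor <;> linarith [this.1, this.2]
  · intro h
    refine ⟨x - intVec k, fun i => ?_, by simp⟩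
    have := h i
    rw [Set.mem_Ioo] at this ⊢
    have hxi : (x - intVec k) i = x i - (k i : ℝ) := rfl
    rw [hxi]
    constructor <;> linarith [this.1, this.2]

lemma convex_cubeTrans (k : Fin n → ℤ) : Convex ℝ (cubeTrans k) := by
  have : cubeTrans k = (fun x => intVec k + x) '' Qcube n := by
    unfold cubeTrans; ext x; constructor
    · rintro ⟨y, hy, rfl⟩; exact ⟨y, hy, by abel⟩
    · rintro ⟨y, hy, rfl⟩; exact ⟨y, hy, by abel⟩
  rw [this]
  exact convex_Qcube.translate (intVec k)

lemma measurableSet_cubeTrans (k : Fin n → ℤ) : MeasurableSet (cubeTrans k) := by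
  have : cubeTrans k = ⋂ i, (fun x : Euc n => x i) ⁻¹' Set.Ioo ((k i : ℝ)) (k i + 1) := by
    ext x; simp [mem_cubeTrans]
  rw [this]
  exact MeasurableSet.iInter fun i => (measurable_apply_euc i) measurableSet_Ioo

lemma cubeTrans_disjoint {k k' : Fin n → ℤ} (h : k ≠ k') :
    Disjoint (cubeTrans k) (cubeTrans k') := by
  rw [Set.disjoint_left]
  intro x hx hx'
  apply h
  funext i
  have h1 := (mem_cubeTrans.1 hx) i
  have h2 := (mem_cubeTrans.1 hx') i
  rw [Set.mem_Ioo] at h1 h2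
  have e1 : (k i : ℝ) < (k' i : ℝ) + 1 := lt_trans h1.1 h2.2
  have e2 : (k' i : ℝ) < (k i : ℝ) + 1 := lt_trans h2.1 h1.2
  have e1' : k i < k' i + 1 := by exact_mod_cast e1
  have e2' : k' i < k i + 1 := by exact_mod_cast e2
  omega

lemma measurableSet_unitCubes (Ω : Set (Euc n)) : MeasurableSet (unitCubes n Ω) :=
  MeasurableSet.biUnion (Set.to_countable _) fun k _ => measurableSet_cubeTrans k

lemma unitCubes_subset (Ω : Set (Euc n)) : unitCubes n Ω ⊆ Ω := by
  intro x hx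
  simp only [unitCubes, Set.mem_iUnion, Set.mem_setOf_eq] at hx
  obtain ⟨k, hk, hxk⟩ := hx
  exact hk hxk

lemma integral_cubeTrans (g : Euc n → ℝ) (hper : ZPeriodic g) (k : Fin n → ℤ) :
    ∫ x in cubeTrans k, g x = ∫ x in Qcube n, g x := by
  have h1 : MeasurePreserving (fun x : Euc n => x + intVec k) volume volume :=
    measurePreserving_add_right volume _
  have h2 : MeasurableEmbedding (fun x : Euc n => x + intVec k) :=
    (MeasurableEquiv.addRight (intVec k)).measurableEmbedding
  have : cubeTrans k = (fun x : Euc n => x + intVec k) '' Qcube n := rfl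
  rw [this, h1.setIntegral_image_emb h2]
  simp only [hper k]

end Vanish13
namespace Vanish13

variable {n : ℕ}

lemma cube_all_or_nothing {E Ω : Set (Euc n)} (hdisj : Disjoint Ω (frontier E))
    {k : Fin n → ℤ} (hk : cubeTrans k ⊆ Ω) :
    cubeTrans k ⊆ E ∨ cubeTrans k ∩ E = ∅ := by
  have hpre : IsPreconnected (cubeTrans k) := (convex_cubeTrans k).isPreconnected
  have hsub : cubeTrans k ⊆ interior E ∪ (closure E)ᶜ := by
    intro z hz
    have hzf : z ∉ frontier E := fun hzf => (Set.disjoint_left.1 hdisj (hk hz)) hzf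
    by_cases h1 : z ∈ interior E
    · exact Or.inl h1
    · exact Or.inr fun h2 => hzf ⟨h2, h1⟩
  have hd : Disjoint (interior E) (closure E)ᶜ :=
    disjoint_compl_right.mono_left interior_subset_closure
  rcases hpre.subset_or_subset isOpen_interior isClosed_closure.isOpen_compl hd hsub with h | h
  · exact Or.inl (h.trans interior_subset)
  · refine Or.inr (Set.eq_empty_of_forall_notMem fun x hx => ?_)
    exact (h hx.1) (subset_closure hx.2)

lemma gterm_zero (g : Euc n → ℝ) (hg : GoodForcing g) (E : Set (Euc n))
    (hE : MeasurableSet E) (Ω : Set (Euc n)) (hΩb : Bornology.IsBounded Ω)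
    (hdisj : Disjoint Ω (frontier E)) :
    ∫ x in E ∩ unitCubes n Ω, g x = 0 := by
  classical
  set S' : Set (Fin n → ℤ) := {k | cubeTrans k ⊆ Ω ∧ cubeTrans k ⊆ E} with hS'
  have hEq : E ∩ unitCubes n Ω = ⋃ k : S', cubeTrans (k : Fin n → ℤ) := by
    ext x
    simp only [Set.mem_inter_iff, Set.mem_iUnion]
    constructor
    · rintro ⟨hxE, hxU⟩
      simp only [unitCubes, Set.mem_iUnion, Set.mem_setOf_eq] at hxU
      obtain ⟨k, hk, hxk⟩ := hxU
      rcases cube_all_or_nothing hdisj hk with h | h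
      · exact ⟨⟨k, hk, h⟩, hxk⟩
      · exact absurd (Set.mem_inter hxk hxE) (by simp [h])
    · rintro ⟨⟨k, hk1, hk2⟩, hxk⟩
      refine ⟨hk2 hxk, ?_⟩
      simp only [unitCubes, Set.mem_iUnion, Set.mem_setOf_eq]
      exact ⟨k, hk1, hxk⟩
  -- integrability
  have hmeas : MeasurableSet (E ∩ unitCubes n Ω) := hE.inter (measurableSet_unitCubes Ω)
  obtain ⟨r, hr⟩ := hΩb.subset_closedBall (0 : Euc n)
  have hvol : volume (E ∩ unitCubes n Ω) < ⊤ := by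
    refine lt_of_le_of_lt (measure_mono ?_) (measure_closedBall_lt_top (x := (0:Euc n)) (r := r))
    exact (Set.inter_subset_right).trans ((unitCubes_subset Ω).trans hr)
  haveI : IsFiniteMeasure (volume.restrict (E ∩ unitCubes n Ω)) :=
    ⟨by rwa [Measure.restrict_apply_univ]⟩
  have hInt : IntegrableOn g (E ∩ unitCubes n Ω) volume :=
    (hg.1.restrict _).integrable le_top
  rw [hEq] at hInt ⊢
  rw [integral_iUnion (fun k => measurableSet_cubeTrans _)
      (fun i j hij => cubeTrans_disjoint (fun h => hij (Subtype.coe_injective h))) hInt]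
  have hzero : ∀ k : S', ∫ x in cubeTrans (k : Fin n → ℤ), g x = 0 := fun k => by
    rw [integral_cubeTrans g hg.2.1]; exact hg.2.2
  simp [hzero]

lemma segment_crossing {E : Set (Euc n)} {x y : Euc n} (hx : x ∈ E) (hy : y ∉ E) :
    ∃ z ∈ segment ℝ x y, z ∈ frontier E := by
  by_contra h
  push_neg at h
  have hsub : segment ℝ x y ⊆ interior E ∪ (closure E)ᶜ := by
    intro z hz
    have hzf := h z hz
    by_cases h1 : z ∈ interior E
    · exact Or.inl h1
    · exact Or.inr fun h2 => hzf ⟨h2, h1⟩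
  have hd : Disjoint (interior E) (closure E)ᶜ :=
    disjoint_compl_right.mono_left interior_subset_closure
  rcases (convex_segment x y).isPreconnected.subset_or_subset isOpen_interior
      isClosed_closure.isOpen_compl hd hsub with hs | hs
  · exact hy (interior_subset (hs (right_mem_segment ℝ x y)))
  · exact (hs (left_mem_segment ℝ x y)) (subset_closure hx)

lemma norm_sub_le_of_segment {x y z : Euc n} (hz : z ∈ segment ℝ x y) :
    ‖x - z‖ ≤ ‖x - y‖ ∧ ‖y - z‖ ≤ ‖x - y‖ := by
  obtain ⟨a, b, ha, hb, hab, rfl⟩ := hz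
  have hba : a = 1 - b := by linarith
  subst hba
  have e1 : x - ((1 - b) • x + b • y) = b • (x - y) := by
    module
  have e2 : y - ((1 - b) • x + b • y) = (1 - b) • (y - x) := by
    module
  have hb1 : b ≤ 1 := by linarith
  rw [e1, e2, norm_smul, norm_smul, Real.norm_eq_abs, Real.norm_eq_abs,
    abs_of_nonneg hb, abs_of_nonneg ha, norm_sub_rev y x]
  constructor
  · nlinarith [norm_nonneg (x - y)]
  · nlinarith [norm_nonneg (x - y)]

end Vanish13
namespace Vanish13

variable {n : ℕ}

/-- The radial tail majorant `h ↦ κ ‖h‖^{-q} 1_{‖h‖ ≥ r}`, valued in `ℝ≥0∞`. -/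
def tailFn (n : ℕ) (κ q r : ℝ) : Euc n → ℝ≥0∞ :=
  fun h => if r ≤ ‖h‖ then ENNReal.ofReal (κ * ‖h‖ ^ (-q)) else 0

lemma measurable_tailFn (κ q r : ℝ) : Measurable (tailFn n κ q r) := by
  unfold tailFn
  refine Measurable.ite ?_ ?_ measurable_const
  · exact measurableSet_le measurable_const measurable_norm
  · exact ((measurable_norm.pow measurable_const).const_mul κ).ennreal_ofReal

lemma tailFn_neg (κ q r : ℝ) (h : Euc n) : tailFn n κ q r (-h) = tailFn n κ q r h := by
  simp [tailFn]

lemma lintegral_tailFn_lt_top (κ q : ℝ) (hκ : 0 ≤ κ) (hq : (n : ℝ) < q) :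
    (∫⁻ h : Euc n, tailFn n κ q 1 h) < ⊤ := by
  have hq0 : 0 < q := lt_of_le_of_lt (Nat.cast_nonneg n) hq
  have hbound : ∀ h : Euc n, tailFn n κ q 1 h ≤
      ENNReal.ofReal (κ * 2 ^ q) * ENNReal.ofReal ((1 + ‖h‖) ^ (-q)) := by
    intro h
    unfold tailFn
    split_ifs with h1
    · rw [← ENNReal.ofReal_mul (by positivity)]
      apply ENNReal.ofReal_le_ofReal
      have hn0 : (0:ℝ) < ‖h‖ := lt_of_lt_of_le one_pos h1
      have h2 : (2 * ‖h‖) ^ (-q) ≤ (1 + ‖h‖) ^ (-q) := by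
        apply Real.rpow_le_rpow_of_nonpos (by linarith) (by linarith) (by linarith)
      have h3 : (2 * ‖h‖) ^ (-q) = 2 ^ (-q) * ‖h‖ ^ (-q) :=
        Real.mul_rpow (by norm_num) (norm_nonneg h)
      have h4 : (2:ℝ) ^ q * 2 ^ (-q) = 1 := by
        rw [← Real.rpow_add (by norm_num)]; simp
      calc κ * ‖h‖ ^ (-q) = κ * 2 ^ q * (2 ^ (-q) * ‖h‖ ^ (-q)) := by
            rw [← mul_assoc, mul_assoc κ, h4, mul_one]
        _ = κ * 2 ^ q * (2 * ‖h‖) ^ (-q) := by rw [h3]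
        _ ≤ κ * 2 ^ q * (1 + ‖h‖) ^ (-q) := by
            apply mul_le_mul_of_nonneg_left h2 (by positivity)
    · exact zero_le
  calc (∫⁻ h : Euc n, tailFn n κ q 1 h)
      ≤ ∫⁻ h : Euc n, ENNReal.ofReal (κ * 2 ^ q) * ENNReal.ofReal ((1 + ‖h‖) ^ (-q)) :=
        lintegral_mono hbound
    _ = ENNReal.ofReal (κ * 2 ^ q) * ∫⁻ h : Euc n, ENNReal.ofReal ((1 + ‖h‖) ^ (-q)) :=
        lintegral_const_mul' _ _ ENNReal.ofReal_ne_top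
    _ < ⊤ := by
        apply ENNReal.mul_lt_top ENNReal.ofReal_lt_top
        have := finite_integral_one_add_norm (E := Euc n) (μ := volume)
          (r := q) (by rwa [finrank_euclideanSpace_fin])
        exact this

lemma lintegral_tailFn_scale (κ q : ℝ) (hκ : 0 ≤ κ) {r : ℝ} (hr : 0 < r) :
    (∫⁻ h : Euc n, tailFn n κ q r h) =
      ENNReal.ofReal (r ^ ((n : ℝ) - q)) * ∫⁻ h : Euc n, tailFn n κ q 1 h := by
  have hmap : Measure.map (fun u : Euc n => r • u) (volume : Measure (Euc n)) =
      ENNReal.ofReal (|(r ^ Module.finrank ℝ (Euc n))⁻¹|) • volume :=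
    Measure.map_addHaar_smul volume hr.ne'
  have h1 : ∫⁻ h : Euc n, tailFn n κ q r h
        ∂(Measure.map (fun u : Euc n => r • u) (volume : Measure (Euc n)))
      = ∫⁻ u : Euc n, tailFn n κ q r (r • u) := by
    exact lintegral_map (measurable_tailFn κ q r) (measurable_const_smul r)
  have h2 : ∀ u : Euc n, tailFn n κ q r (r • u) =
      ENNReal.ofReal (r ^ (-q)) * tailFn n κ q 1 u := by
    intro u
    unfold tailFn
    rw [norm_smul, Real.norm_eq_abs, abs_of_pos hr]
    by_cases h1u : 1 ≤ ‖u‖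
    · rw [if_pos (by nlinarith), if_pos h1u]
      rw [← ENNReal.ofReal_mul (by positivity)]
      congr 1
      rw [Real.mul_rpow hr.le (norm_nonneg u)]
      ring
    · rw [if_neg (by
        intro hcon
        apply h1u
        nlinarith), if_neg h1u, mul_zero]
  rw [hmap, lintegral_smul_measure] at h1
  simp_rw [h2] at h1
  rw [lintegral_const_mul' _ _ ENNReal.ofReal_ne_top] at h1
  have hd : Module.finrank ℝ (Euc n) = n := finrank_euclideanSpace_fin
  rw [hd] at h1
  have hpow : (0:ℝ) < r ^ n := pow_pos hr n
  have habs : |(r ^ n)⁻¹| = (r ^ n)⁻¹ := abs_of_pos (by positivity)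
  rw [habs, ENNReal.ofReal_inv_of_pos hpow] at h1
  set c : ℝ≥0∞ := ENNReal.ofReal (r ^ n) with hc
  have hc0 : c ≠ 0 := by
    simp [hc, ENNReal.ofReal_eq_zero, not_le, hpow]
  have hctop : c ≠ ⊤ := ENNReal.ofReal_ne_top
  have : (∫⁻ h : Euc n, tailFn n κ q r h)
      = c * (c⁻¹ * ∫⁻ h : Euc n, tailFn n κ q r h) := by
    rw [← mul_assoc, ENNReal.mul_inv_cancel hc0 hctop, one_mul]
  rw [smul_eq_mul] at h1; rw [this, h1, ← mul_assoc, hc, ← ENNReal.ofReal_mul hpow.le]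
  congr 2
  rw [← Real.rpow_natCast r n, ← Real.rpow_add hr, sub_eq_add_neg]

end Vanish13
namespace Vanish13

variable {n : ℕ}

lemma lintegral_shift (f : Euc n → ℝ≥0∞) (hf : Measurable f) (x : Euc n) :
    ∫⁻ y : Euc n, f (y - x) = ∫⁻ h : Euc n, f h :=
  (measurePreserving_sub_right volume x).lintegral_comp hf

lemma lintegral_prod_slab (Ω : Set (Euc n)) (f : Euc n → ℝ≥0∞) (hf : Measurable f)
    (hsym : ∀ h, f (-h) = f h) :
    (∫⁻ z in (Ω ×ˢ (Set.univ : Set (Euc n))) ∪ ((Set.univ : Set (Euc n)) ×ˢ Ω),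
        f (z.1 - z.2)) ≤ 2 * volume Ω * ∫⁻ h : Euc n, f h := by
  have hfm : Measurable fun z : Euc n × Euc n => f (z.1 - z.2) :=
    hf.comp (measurable_fst.sub measurable_snd)
  have hvol : (volume : Measure (Euc n × Euc n)) =
      (volume : Measure (Euc n)).prod volume := Measure.volume_eq_prod _ _
  have h1 : (∫⁻ z in Ω ×ˢ (Set.univ : Set (Euc n)), f (z.1 - z.2))
      = volume Ω * ∫⁻ h : Euc n, f h := by
    rw [hvol, ← Measure.prod_restrict, Measure.restrict_univ,
      lintegral_prod _ hfm.aemeasurable]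
    have : ∀ x : Euc n, (∫⁻ y : Euc n, f (x - y)) = ∫⁻ h : Euc n, f h := by
      intro x
      have : ∀ y : Euc n, f (x - y) = f (y - x) := by
        intro y; rw [← hsym (y - x)]; congr 1; abel
      simp_rw [this]
      exact lintegral_shift f hf x
    simp_rw [this]
    rw [lintegral_const, Measure.restrict_apply_univ, mul_comm]
  have h2 : (∫⁻ z in (Set.univ : Set (Euc n)) ×ˢ Ω, f (z.1 - z.2))
      = volume Ω * ∫⁻ h : Euc n, f h := by
    rw [hvol, ← Measure.prod_restrict, Measure.restrict_univ,
      lintegral_prod_symm _ hfm.aemeasurable]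
    have : ∀ y : Euc n, (∫⁻ x : Euc n, f (x - y)) = ∫⁻ h : Euc n, f h := by
      intro y; exact lintegral_shift f hf y
    simp_rw [this]
    rw [lintegral_const, Measure.restrict_apply_univ, mul_comm]
  calc (∫⁻ z in (Ω ×ˢ (Set.univ : Set (Euc n))) ∪ ((Set.univ : Set (Euc n)) ×ˢ Ω),
        f (z.1 - z.2))
      ≤ (∫⁻ z in Ω ×ˢ (Set.univ : Set (Euc n)), f (z.1 - z.2))
        + ∫⁻ z in (Set.univ : Set (Euc n)) ×ˢ Ω, f (z.1 - z.2) :=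
        lintegral_union_le _ _ _
    _ = 2 * volume Ω * ∫⁻ h : Euc n, f h := by rw [h1, h2]; ring

end Vanish13
namespace Vanish13

variable {n : ℕ}

lemma volume_slabA_le (p : Euc n) (hp : ‖p‖ = 1) {L₁ L R : ℝ} (hR : 0 < R) (hL : 0 < L) :
    volume (slabA p L₁ L R) ≤
      ENNReal.ofReal (2 * (L / R) + 3) *
        (ENNReal.ofReal ((2 * R) ^ n) * volume (ball (0 : Euc n) 1)) := by
  classical
  have hn0 : 0 < n := by
    rcases Nat.eq_zero_or_pos n with h | h
    · subst h; exact absurd hp (by simp [Subsingleton.elim p 0])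
    · exact h
  haveI : Nonempty (Fin n) := ⟨⟨0, hn0⟩⟩
  haveI : Nontrivial (Euc n) :=
    ⟨⟨EuclideanSpace.single ⟨0, hn0⟩ (1:ℝ), 0, by
      intro hcon
      have := congrArg (fun v : Euc n => v ⟨0, hn0⟩) hcon
      simp at this⟩⟩
  set N : ℤ := ⌈L / R⌉ with hN
  have hLR : 0 < L / R := div_pos hL hR
  have hN0 : 0 ≤ N := by positivity
  have hcover : slabA p L₁ L R ⊆
      ⋃ j ∈ Finset.Icc (-N) N, ball (((j : ℝ) * R) • p) (2 * R) := by
    intro x hx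
    obtain ⟨h1, h2, h3⟩ := hx
    set t : ℝ := ⟪x, p⟫ with ht
    set j : ℤ := ⌊t / R⌋ with hj
    have hjle : (j : ℝ) ≤ t / R := Int.floor_le _
    have hjgt : t / R < (j : ℝ) + 1 := Int.lt_floor_add_one _
    have habs : |t| < L := h2
    have htL : t / R < L / R := div_lt_div_of_pos_right (lt_of_le_of_lt (le_abs_self t) habs) hR
    have htL' : -(L / R) < t / R := by
      rw [← neg_div]
      exact div_lt_div_of_pos_right (by
        have := neg_abs_le t; linarith [habs]) hR
    have hceil : (L / R : ℝ) ≤ (N : ℝ) := Int.le_ceil _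
    have hjN : j ≤ N := by
      have : (j : ℝ) < (N : ℝ) := lt_of_le_of_lt hjle (lt_of_lt_of_le htL hceil)
      exact_mod_cast this.le
    have hjN' : -N ≤ j := by
      have : -(N : ℝ) < (j : ℝ) + 1 := by
        have : -(N:ℝ) ≤ -(L/R) := by linarith
        linarith
      have h' : -N < j + 1 := by exact_mod_cast this
      omega
    rw [Set.mem_iUnion]
    refine ⟨j, ?_⟩
    rw [Set.mem_iUnion]
    refine ⟨Finset.mem_Icc.2 ⟨hjN', hjN⟩, ?_⟩
    rw [mem_ball, dist_eq_norm]
    have hdec : x - ((j : ℝ) * R) • p = (x - t • p) + (t - (j : ℝ) * R) • p := by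
      rw [sub_smul]; abel
    have hfrac : t - (j : ℝ) * R = (t / R - (j : ℝ)) * R := by
      field_simp
    have hbnd : |t - (j : ℝ) * R| < R := by
      rw [hfrac, abs_mul, abs_of_pos hR]
      have h0 : 0 ≤ t / R - (j : ℝ) := by linarith
      have h1' : t / R - (j : ℝ) < 1 := by linarith
      rw [abs_of_nonneg h0]
      nlinarith
    calc ‖x - ((j : ℝ) * R) • p‖ ≤ ‖x - t • p‖ + ‖(t - (j : ℝ) * R) • p‖ := by
          rw [hdec]; exact norm_add_le _ _
      _ = ‖x - t • p‖ + |t - (j : ℝ) * R| := by rw [norm_smul, Real.norm_eq_abs, hp, mul_one]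
      _ < R + R := add_lt_add h3 hbnd
      _ = 2 * R := by ring
  calc volume (slabA p L₁ L R)
      ≤ volume (⋃ j ∈ Finset.Icc (-N) N, ball (((j : ℝ) * R) • p) (2 * R)) :=
        measure_mono hcover
    _ ≤ ∑ j ∈ Finset.Icc (-N) N, volume (ball (((j : ℝ) * R) • p) (2 * R)) :=
        measure_biUnion_finset_le _ _
    _ = (Finset.Icc (-N) N).card •
          (ENNReal.ofReal ((2 * R) ^ n) * volume (ball (0 : Euc n) 1)) := by
        rw [← Finset.sum_const]
        apply Finset.sum_congr rfl
        intro j _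
        rw [Measure.addHaar_ball _ _ (by positivity : (0:ℝ) ≤ 2 * R)]
        congr 2
        exact congrArg _ finrank_euclideanSpace_fin
    _ ≤ ENNReal.ofReal (2 * (L / R) + 3) *
          (ENNReal.ofReal ((2 * R) ^ n) * volume (ball (0 : Euc n) 1)) := by
        rw [nsmul_eq_mul]
        apply mul_le_mul_left
        have h2 : ((Finset.Icc (-N) N).card : ℤ) = 2 * N + 1 := by
          rw [Int.card_Icc]; omega
        have h3 : (((Finset.Icc (-N) N).card : ℕ) : ℝ) = 2 * (N : ℝ) + 1 := by
          exact_mod_cast congrArg (Int.cast : ℤ → ℝ) h2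
        have hcardR : (((Finset.Icc (-N) N).card : ℕ) : ℝ) ≤ 2 * (L / R) + 3 := by
          rw [h3]
          have hNR : (N : ℝ) < L / R + 1 := by exact_mod_cast Int.ceil_lt_add_one (L / R)
          linarith
        calc ((Finset.Icc (-N) N).card : ℝ≥0∞)
            = ENNReal.ofReal (((Finset.Icc (-N) N).card : ℕ) : ℝ) :=
              (ENNReal.ofReal_natCast _).symm
          _ ≤ ENNReal.ofReal (2 * (L / R) + 3) := ENNReal.ofReal_le_ofReal hcardR
end Vanish13
namespace Vanish13

variable {n : ℕ}

lemma isOpen_slabA (p : Euc n) (L₁ L₂ R : ℝ) : IsOpen (slabA p L₁ L₂ R) := by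
  have hc : Continuous fun x : Euc n => |⟪x, p⟫| :=
    (continuous_id.inner continuous_const).abs
  have hc2 : Continuous fun x : Euc n => ‖x - ⟪x, p⟫ • p‖ :=
    by fun_prop
  have hdec : slabA p L₁ L₂ R = {x : Euc n | L₁ < |⟪x, p⟫|} ∩
      ({x : Euc n | |⟪x, p⟫| < L₂} ∩ {x : Euc n | ‖x - ⟪x, p⟫ • p‖ < R}) := by
    rfl
  rw [hdec]
  exact (isOpen_lt continuous_const hc).inter
    ((isOpen_lt hc continuous_const).inter (isOpen_lt hc2 continuous_const))

end Vanish13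
namespace Vanish13

variable {n : ℕ}

lemma setInd_abs_one {E : Set (Euc n)} {x y : Euc n} (h : setInd E x ≠ setInd E y) :
    |setInd E x - setInd E y| = 1 ∧ ((x ∈ E ∧ y ∉ E) ∨ (x ∉ E ∧ y ∈ E)) := by
  unfold setInd at *
  by_cases hx : x ∈ E <;> by_cases hy : y ∈ E <;>
    simp [Set.indicator_apply, hx, hy] at h ⊢ <;> tauto

lemma perK_le_slab {s₁ s₂ δ κ₁ κ₂ κ₃ : ℝ} {K : Euc n → Euc n → ℝ}
    (hK : IsAdmissibleKernel n s₁ s₂ δ κ₁ κ₂ κ₃ K)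
    {p : Euc n} (hp : ‖p‖ = 1) {E : Set (Euc n)} {M : ℝ}
    (hEb : frontier E ⊆ {x : Euc n | |⟪x, p⟫| ≤ M})
    {Ω : Set (Euc n)} (hΩm : MeasurableSet Ω) {R : ℝ} (hMR : M < R)
    (hΩ : ∀ x ∈ Ω, R < |⟪x, p⟫|) :
    perK K E Ω ≤ 2 * volume Ω *
      ∫⁻ h : Euc n, tailFn n κ₂ ((n : ℝ) + 2 * s₂) (R - M) h := by
  set q : ℝ := (n : ℝ) + 2 * s₂ with hq
  set r : ℝ := R - M with hr
  -- pointwise bound on the sharp set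
  have key : ∀ z ∈ sharpSet Ω,
      ENNReal.ofReal (|setInd E z.1 - setInd E z.2| / 2 * K z.1 z.2) ≤
        tailFn n κ₂ q r (z.1 - z.2) := by
    rintro ⟨x, y⟩ hz
    by_cases hxy : setInd E x = setInd E y
    · simp only [hxy, sub_self, abs_zero, zero_div, zero_mul, ENNReal.ofReal_zero]
      exact zero_le
    · obtain ⟨habs, hcase⟩ := setInd_abs_one hxy
      have hΩxy : x ∈ Ω ∨ y ∈ Ω := by
        rcases hz with (h | h) | h
        · exact Or.inl h.1
        · exact Or.inr h.2
        · exact Or.inl h.1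
      -- find a frontier point on the segment
      have hzseg : ∃ z₀ ∈ segment ℝ x y, z₀ ∈ frontier E := by
        rcases hcase with ⟨hx, hy⟩ | ⟨hx, hy⟩
        · exact segment_crossing hx hy
        · obtain ⟨z₀, hz₀, hz₀f⟩ := segment_crossing hy hx
          exact ⟨z₀, by rwa [segment_symm], hz₀f⟩
      obtain ⟨z₀, hz₀s, hz₀f⟩ := hzseg
      have hz₀M : |⟪z₀, p⟫| ≤ M := hEb hz₀f
      have hdist : r ≤ ‖x - y‖ := by
        obtain ⟨e1, e2⟩ := norm_sub_le_of_segment hz₀s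
        rcases hΩxy with hxΩ | hyΩ
        · have h5 : R - M < |⟪x, p⟫| - |⟪z₀, p⟫| := by
            have := hΩ x hxΩ; linarith
          have h6 : |⟪x, p⟫| - |⟪z₀, p⟫| ≤ |⟪x - z₀, p⟫| := by
            rw [inner_sub_left]; exact abs_sub_abs_le_abs_sub _ _
          have h7 : |⟪x - z₀, p⟫| ≤ ‖x - z₀‖ := by
            have := abs_real_inner_le_norm (x - z₀) p
            rwa [hp, mul_one] at this
          have := h5.le.trans (h6.trans (h7.trans e1))
          linarith
        · have h5 : R - M < |⟪y, p⟫| - |⟪z₀, p⟫| := by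
            have := hΩ y hyΩ; linarith
          have h6 : |⟪y, p⟫| - |⟪z₀, p⟫| ≤ |⟪y - z₀, p⟫| := by
            rw [inner_sub_left]; exact abs_sub_abs_le_abs_sub _ _
          have h7 : |⟪y - z₀, p⟫| ≤ ‖y - z₀‖ := by
            have := abs_real_inner_le_norm (y - z₀) p
            rwa [hp, mul_one] at this
          have := h5.le.trans (h6.trans (h7.trans e2))
          linarith
      have hne : x ≠ y := fun h => hxy (by rw [h])
      have hnorm0 : (0:ℝ) < ‖x - y‖ := by
        rw [norm_pos_iff, sub_ne_zero]; exact hne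
      unfold tailFn
      rw [if_pos hdist]
      apply ENNReal.ofReal_le_ofReal
      have hKb := hK.upper x y hne
      have hrw : (1 : ℝ) / ‖x - y‖ ^ ((n : ℝ) + 2 * s₂) = ‖x - y‖ ^ (-q) := by
        rw [Real.rpow_neg (norm_nonneg _), one_div, hq]
      have hKmin : K x y ≤ κ₂ * ‖x - y‖ ^ (-q) := by
        refine hKb.trans ?_
        rw [← hrw]
        exact mul_le_mul_of_nonneg_left (min_le_right _ _) hK.κ₂_pos.le
      rw [habs]
      have hK0 : 0 ≤ K x y := hK.nonneg x y
      calc (1:ℝ) / 2 * K x y ≤ K x y := by linarith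
        _ ≤ κ₂ * ‖x - y‖ ^ (-q) := hKmin
  -- integrate
  have hmeas : Measurable fun z : Euc n × Euc n => tailFn n κ₂ q r (z.1 - z.2) :=
    (measurable_tailFn κ₂ q r).comp (measurable_fst.sub measurable_snd)
  have hsharp : sharpSet Ω ⊆
      (Ω ×ˢ (Set.univ : Set (Euc n))) ∪ ((Set.univ : Set (Euc n)) ×ˢ Ω) := by
    rintro ⟨x, y⟩ hz
    rcases hz with (h | h) | h
    · exact Or.inl ⟨h.1, Set.mem_univ _⟩
    · exact Or.inr ⟨Set.mem_univ _, h.2⟩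
    · exact Or.inl ⟨h.1, Set.mem_univ _⟩
  calc perK K E Ω
      ≤ ∫⁻ z in sharpSet Ω, tailFn n κ₂ q r (z.1 - z.2) :=
        setLIntegral_mono hmeas key
    _ ≤ ∫⁻ z in (Ω ×ˢ (Set.univ : Set (Euc n))) ∪ ((Set.univ : Set (Euc n)) ×ˢ Ω),
          tailFn n κ₂ q r (z.1 - z.2) := lintegral_mono_set hsharp
    _ ≤ 2 * volume Ω * ∫⁻ h : Euc n, tailFn n κ₂ q r h :=
        lintegral_prod_slab Ω _ (measurable_tailFn κ₂ q r) (tailFn_neg κ₂ q r)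

end Vanish13
open Vanish13 in
/-- Vanishing of the energy in far-away slabs. -/
theorem vanishing_energy_in_slabs
    (n : ℕ) (hn : 1 ≤ n) (s₁ s₂ δ κ₁ κ₂ κ₃ : ℝ)
    (K : Euc n → Euc n → ℝ) (hK : IsAdmissibleKernel n s₁ s₂ δ κ₁ κ₂ κ₃ K)
    (g : Euc n → ℝ) (hg : GoodForcing g)
    (p : Euc n) (hp : ‖p‖ = 1)
    (E : Set (Euc n)) (hE : MeasurableSet E)
    (M : ℝ) (hM : 0 < M) (hEb : frontier E ⊆ {x : Euc n | |⟪x, p⟫| ≤ M})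
    (α : ℝ) (hα0 : 0 < α) (hα : α < 2 * s₂ - 1) :
    Tendsto
      (fun R : ℝ =>
        ((R ^ ((1 : ℝ) - (n : ℝ)) : ℝ) : EReal)
          * energyF K g E (slabA p R (R ^ (1 + α)) R))
      atTop (nhds (0 : EReal)) := by
  classical
  have hs₂ : 1 / 2 < s₂ := hK.s₂_gt
  set q : ℝ := (n : ℝ) + 2 * s₂ with hq
  have hqn : (n : ℝ) < q := by rw [hq]; linarith
  have hκ₂ : 0 ≤ κ₂ := hK.κ₂_pos.le
  set T : ℝ≥0∞ := ∫⁻ h : Euc n, tailFn n κ₂ q 1 h with hT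
  have hTtop : T ≠ ⊤ := (lintegral_tailFn_lt_top κ₂ q hκ₂ hqn).ne
  set Tt : ℝ := T.toReal with hTt
  have hTofReal : T = ENNReal.ofReal Tt := (ENNReal.ofReal_toReal hTtop).symm
  have hTt0 : 0 ≤ Tt := ENNReal.toReal_nonneg
  set B : ℝ≥0∞ := volume (ball (0 : Euc n) 1) with hB
  have hBtop : B ≠ ⊤ := measure_ball_lt_top.ne
  set Bt : ℝ := B.toReal with hBt
  have hBofReal : B = ENNReal.ofReal Bt := (ENNReal.ofReal_toReal hBtop).symm
  have hBt0 : 0 ≤ Bt := ENNReal.toReal_nonneg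
  set C : ℝ := 2 * (5 * ((2:ℝ) ^ n * Bt * ((2:ℝ) ^ (2 * s₂) * Tt))) with hC
  have hC0 : 0 ≤ C := by positivity
  have hlim : Tendsto (fun R : ℝ => C * R ^ (1 + α - 2 * s₂)) atTop (𝓝 (0 : ℝ)) := by
    have h1 : Tendsto (fun R : ℝ => R ^ (-(2 * s₂ - 1 - α))) atTop (𝓝 (0 : ℝ)) :=
      tendsto_rpow_neg_atTop (by linarith)
    have h2 : (fun R : ℝ => C * R ^ (1 + α - 2 * s₂))
        = fun R : ℝ => C * R ^ (-(2 * s₂ - 1 - α)) := by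
      funext R; congr 1; ring_nf
    rw [h2]
    simpa using h1.const_mul C
  have hev : ∀ᶠ R in (atTop : Filter ℝ),
      (0 : EReal) ≤ ((R ^ ((1 : ℝ) - (n : ℝ)) : ℝ) : EReal)
          * energyF K g E (slabA p R (R ^ (1 + α)) R) ∧
      ((R ^ ((1 : ℝ) - (n : ℝ)) : ℝ) : EReal)
          * energyF K g E (slabA p R (R ^ (1 + α)) R)
        ≤ ((C * R ^ (1 + α - 2 * s₂) : ℝ) : EReal) := by
    filter_upwards [eventually_ge_atTop (max (2 * M + 2) 2)] with R hRge
    have hR2 : (2:ℝ) ≤ R := le_trans (le_max_right _ _) hRge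
    have hRM2 : 2 * M + 2 ≤ R := le_trans (le_max_left _ _) hRge
    have hR0 : (0:ℝ) < R := by linarith
    have hR1 : (1:ℝ) ≤ R := by linarith
    have hMR : M < R := by linarith
    have hrpos : (0:ℝ) < R - M := by linarith
    have hhalf : R / 2 ≤ R - M := by linarith
    set Ω : Set (Euc n) := slabA p R (R ^ (1 + α)) R with hΩ
    have hΩo : IsOpen Ω := isOpen_slabA p _ _ _
    have hΩm : MeasurableSet Ω := hΩo.measurableSet
    have hΩsub : ∀ x ∈ Ω, R < |⟪x, p⟫| := fun x hx => hx.1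
    have hΩbd : Ω ⊆ closedBall (0 : Euc n) (R ^ (1 + α) + R) := by
      intro x hx
      obtain ⟨h1, h2, h3⟩ := hx
      rw [mem_closedBall, dist_zero_right]
      have hxp : ‖⟪x, p⟫ • p‖ = |⟪x, p⟫| := by
        rw [norm_smul, Real.norm_eq_abs, hp, mul_one]
      calc ‖x‖ = ‖(x - ⟪x, p⟫ • p) + ⟪x, p⟫ • p‖ := by rw [sub_add_cancel]
        _ ≤ ‖x - ⟪x, p⟫ • p‖ + ‖⟪x, p⟫ • p‖ := norm_add_le _ _
        _ ≤ R + R ^ (1 + α) := by rw [hxp]; exact add_le_add h3.le h2.le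
        _ = R ^ (1 + α) + R := by ring
    have hΩb : Bornology.IsBounded Ω := Metric.isBounded_closedBall.subset hΩbd
    have hdisj : Disjoint Ω (frontier E) := by
      rw [Set.disjoint_left]
      intro x hx hxf
      have h1 : R < |⟪x, p⟫| := hΩsub x hx
      have h2 : |⟪x, p⟫| ≤ M := hEb hxf
      linarith
    have hg0 : ∫ x in E ∩ unitCubes n Ω, g x = 0 := gterm_zero g hg E hE Ω hΩb hdisj
    have hEF : energyF K g E Ω = ((perK K E Ω : ℝ≥0∞) : EReal) := by
      rw [energyF, hg0]; simp
    have ha0 : (0:ℝ) ≤ R ^ ((1 : ℝ) - (n : ℝ)) := Real.rpow_nonneg hR0.le _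
    have hcoe : ((R ^ ((1 : ℝ) - (n : ℝ)) : ℝ) : EReal)
        = ((ENNReal.ofReal (R ^ ((1 : ℝ) - (n : ℝ))) : ℝ≥0∞) : EReal) := by
      rw [EReal.coe_ennreal_ofReal, max_eq_left ha0]
    have hprod : ((R ^ ((1 : ℝ) - (n : ℝ)) : ℝ) : EReal) * energyF K g E Ω
        = ((ENNReal.ofReal (R ^ ((1 : ℝ) - (n : ℝ))) * perK K E Ω : ℝ≥0∞) : EReal) := by
      rw [hEF, hcoe, EReal.coe_ennreal_mul]
    constructor
    · rw [hprod]; exact EReal.coe_ennreal_nonneg _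
    · rw [hprod]
      have hup : ENNReal.ofReal (R ^ ((1 : ℝ) - (n : ℝ))) * perK K E Ω
          ≤ ENNReal.ofReal (C * R ^ (1 + α - 2 * s₂)) := by
        have hper := perK_le_slab hK hp hEb hΩm hMR hΩsub
        rw [lintegral_tailFn_scale κ₂ q hκ₂ hrpos] at hper
        have hL0 : (0:ℝ) < R ^ (1 + α) := Real.rpow_pos_of_pos hR0 _
        have hvol := volume_slabA_le p hp (L₁ := R) (L := R ^ (1 + α)) (R := R) hR0 hL0
        have hLR : R ^ (1 + α) / R = R ^ α := by
          calc R ^ (1 + α) / R = R ^ (1 + α) / R ^ (1:ℝ) := by rw [Real.rpow_one]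
            _ = R ^ (1 + α - 1) := (Real.rpow_sub hR0 _ _).symm
            _ = R ^ α := by ring_nf
        rw [hLR] at hvol
        have step1 : perK K E Ω ≤
            2 * (ENNReal.ofReal (2 * R ^ α + 3) * (ENNReal.ofReal ((2 * R) ^ n) * B))
              * (ENNReal.ofReal ((R - M) ^ ((n:ℝ) - q)) * T) := by
          refine hper.trans ?_
          exact mul_le_mul_left (mul_le_mul_right hvol 2) _
        have h2e : (2:ℝ≥0∞) = ENNReal.ofReal 2 := by norm_num
        have step2 : 2 * (ENNReal.ofReal (2 * R ^ α + 3) * (ENNReal.ofReal ((2 * R) ^ n) * B))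
              * (ENNReal.ofReal ((R - M) ^ ((n:ℝ) - q)) * T)
            = ENNReal.ofReal (2 * ((2 * R ^ α + 3) * ((2 * R) ^ n * Bt))
                * ((R - M) ^ ((n:ℝ) - q) * Tt)) := by
          rw [hBofReal, hTofReal, h2e,
            ← ENNReal.ofReal_mul (by positivity : (0:ℝ) ≤ (2 * R) ^ n),
            ← ENNReal.ofReal_mul (by positivity : (0:ℝ) ≤ 2 * R ^ α + 3),
            ← ENNReal.ofReal_mul (by norm_num : (0:ℝ) ≤ 2),
            ← ENNReal.ofReal_mul (Real.rpow_nonneg hrpos.le _),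
            ← ENNReal.ofReal_mul (by positivity)]
        have hfin : R ^ ((1 : ℝ) - (n : ℝ)) * (2 * ((2 * R ^ α + 3) * ((2 * R) ^ n * Bt))
                * ((R - M) ^ ((n:ℝ) - q) * Tt)) ≤ C * R ^ (1 + α - 2 * s₂) := by
          have hns : (n:ℝ) - q = -(2 * s₂) := by rw [hq]; ring
          have hb1 : (R - M) ^ (-(2 * s₂)) ≤ 2 ^ (2 * s₂) * R ^ (-(2 * s₂)) := by
            have h1 : (R - M) ^ (-(2 * s₂)) ≤ (R / 2) ^ (-(2 * s₂)) :=
              Real.rpow_le_rpow_of_nonpos (by positivity) hhalf (by linarith)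
            have h2 : (R / 2) ^ (-(2 * s₂)) = 2 ^ (2 * s₂) * R ^ (-(2 * s₂)) := by
              rw [Real.div_rpow hR0.le (by norm_num : (0:ℝ) ≤ 2),
                Real.rpow_neg (by norm_num : (0:ℝ) ≤ 2) (2 * s₂), div_inv_eq_mul, mul_comm]
            linarith [h1, h2.le, h2.ge]
          have hb2 : 2 * R ^ α + 3 ≤ 5 * R ^ α := by
            nlinarith [Real.one_le_rpow hR1 hα0.le]
          have hkey : R ^ ((1 : ℝ) - (n : ℝ)) * (R ^ α * (R ^ (n:ℕ) * R ^ (-(2 * s₂))))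
              = R ^ (1 + α - 2 * s₂) := by
            rw [← Real.rpow_natCast R n, ← Real.rpow_add hR0, ← Real.rpow_add hR0,
              ← Real.rpow_add hR0]
            congr 1
            push_cast
            ring
          rw [hns, mul_pow]
          calc R ^ ((1 : ℝ) - (n : ℝ)) * (2 * ((2 * R ^ α + 3) * (2 ^ n * R ^ n * Bt))
                  * ((R - M) ^ (-(2 * s₂)) * Tt))
              ≤ R ^ ((1 : ℝ) - (n : ℝ)) * (2 * ((5 * R ^ α) * (2 ^ n * R ^ n * Bt))
                  * ((2 ^ (2 * s₂) * R ^ (-(2 * s₂))) * Tt)) := by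
                have hRa : (0:ℝ) ≤ R ^ α := Real.rpow_nonneg hR0.le _
                have hRn : (0:ℝ) ≤ R ^ (n:ℕ) := by positivity
                gcongr
            _ = C * (R ^ ((1 : ℝ) - (n : ℝ)) * (R ^ α * (R ^ (n:ℕ) * R ^ (-(2 * s₂))))) := by
                rw [hC]; ring
            _ = C * R ^ (1 + α - 2 * s₂) := by rw [hkey]
        calc ENNReal.ofReal (R ^ ((1 : ℝ) - (n : ℝ))) * perK K E Ω
            ≤ ENNReal.ofReal (R ^ ((1 : ℝ) - (n : ℝ)))
              * ENNReal.ofReal (2 * ((2 * R ^ α + 3) * ((2 * R) ^ n * Bt))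
                * ((R - M) ^ ((n:ℝ) - q) * Tt)) := by
              exact mul_le_mul_right (step1.trans_eq step2) _
          _ = ENNReal.ofReal (R ^ ((1 : ℝ) - (n : ℝ)) * (2 * ((2 * R ^ α + 3)
                * ((2 * R) ^ n * Bt)) * ((R - M) ^ ((n:ℝ) - q) * Tt))) :=
              (ENNReal.ofReal_mul ha0).symm
          _ ≤ ENNReal.ofReal (C * R ^ (1 + α - 2 * s₂)) := ENNReal.ofReal_le_ofReal hfin
      calc ((ENNReal.ofReal (R ^ ((1 : ℝ) - (n : ℝ))) * perK K E Ω : ℝ≥0∞) : EReal)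
          ≤ ((ENNReal.ofReal (C * R ^ (1 + α - 2 * s₂)) : ℝ≥0∞) : EReal) :=
            EReal.coe_ennreal_le_coe_ennreal_iff.2 hup
        _ = ((C * R ^ (1 + α - 2 * s₂) : ℝ) : EReal) := by
            rw [EReal.coe_ennreal_ofReal, max_eq_left (by positivity)]
  refine tendsto_of_tendsto_of_tendsto_of_le_of_le' tendsto_const_nhds
    ?_ (hev.mono fun R h => h.1) (hev.mono fun R h => h.2)
  have := EReal.tendsto_coe.2 hlim
  simpa using this

end
end

section
/- Let n ≥ 1, s ∈ (0,1/2) and δ > 0. Then there exists C > 0, depending only on δ, n and s, such that for every measurable function u : ℝⁿ → ℝ with ∫_Q u(x) dx = 0 one has ∬_{Q×Q} |u(x)−u(y)| / |x−y|^{n+2s} dx dy ≤ C ∬_{(Q×Q) ∩ {|x−y| < δ}} |u(x)−u(y)| / |x−y|^{n+2s} dx dy. -/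
open MeasureTheory ENNReal Filter Metric
open scoped RealInnerProductSpace Pointwise Topology NNReal

noncomputable section

namespace SRI

variable {n : ℕ}

def eQ (n : ℕ) : Euc n → ℝ≥0∞ := (Qcube n).indicator 1
def eB (n : ℕ) (r : ℝ) : Euc n → ℝ≥0∞ := (Metric.ball (0:Euc n) r).indicator 1
def dd (u : Euc n → ℝ) (x y : Euc n) : ℝ≥0∞ := ENNReal.ofReal |u x - u y|
def Jd (n : ℕ) (u : Euc n → ℝ) (r : ℝ) : ℝ≥0∞ :=
  ∫⁻ x, ∫⁻ y, (eQ n x * eQ n y * eB n r (x - y)) * dd u x y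

lemma measQ : MeasurableSet (Qcube n) := by
  have : Qcube n = ⋂ i, (fun x : Euc n => x i) ⁻¹' Set.Ioo 0 1 := by
    ext x; simp [Qcube, Set.mem_iInter]
  rw [this]
  exact MeasurableSet.iInter fun i => measurableSet_Ioo.preimage ((EuclideanSpace.proj i : Euc n →L[ℝ] ℝ).continuous.measurable)

lemma eQ_meas : Measurable (eQ n) := measurable_const.indicator measQ
lemma eB_meas (r : ℝ) : Measurable (eB n r) := measurable_const.indicator measurableSet_ball
lemma eQ_ne_top (x : Euc n) : eQ n x ≠ ⊤ := by
  unfold eQ; by_cases h : x ∈ Qcube n <;> simp [h]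
lemma eQ_of_mem {x : Euc n} (h : x ∈ Qcube n) : eQ n x = 1 := by simp [eQ, h]
lemma eQ_of_not_mem {x : Euc n} (h : x ∉ Qcube n) : eQ n x = 0 := by simp [eQ, h]
lemma eB_of_lt {r : ℝ} {w : Euc n} (h : ‖w‖ < r) : eB n r w = 1 := by
  simp [eB, mem_ball_zero_iff, h]
lemma eB_of_not_lt {r : ℝ} {w : Euc n} (h : ¬ ‖w‖ < r) : eB n r w = 0 := by
  simp [eB, mem_ball_zero_iff, h]
lemma eB_symm (r : ℝ) (x y : Euc n) : eB n r (x - y) = eB n r (y - x) := by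
  by_cases h : ‖x - y‖ < r
  · rw [eB_of_lt h, eB_of_lt (by rwa [norm_sub_rev])]
  · rw [eB_of_not_lt h, eB_of_not_lt (by rwa [norm_sub_rev])]

lemma eB_two (r : ℝ) (w : Euc n) : eB n (2*r) ((2:ℝ)•w) = eB n r w := by
  have hn : ‖(2:ℝ)•w‖ = 2 * ‖w‖ := by rw [norm_smul]; simp
  by_cases h : ‖w‖ < r
  · rw [eB_of_lt h, eB_of_lt (by rw [hn]; linarith)]
  · rw [eB_of_not_lt h, eB_of_not_lt (by rw [hn]; intro hc; apply h; linarith)]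

lemma dd_symm (u : Euc n → ℝ) (x y : Euc n) : dd u x y = dd u y x := by
  unfold dd; rw [abs_sub_comm]

lemma mem_of_two_smul {x z : Euc n} (hx : x ∈ Qcube n) (hz : (2:ℝ)•z - x ∈ Qcube n) :
    z ∈ Qcube n := by
  intro i
  have h1 := hx i
  have h2 := hz i
  have hzi : ((2:ℝ)•z - x) i = 2 * z i - x i := by
    simp [PiLp.smul_apply, PiLp.sub_apply, smul_eq_mul]
  rw [hzi] at h2
  simp only [Set.mem_Ioo] at *
  constructor <;> [linarith; linarith]

lemma norm_le_sqrt {x y : Euc n} (hx : x ∈ Qcube n) (hy : y ∈ Qcube n) :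
    ‖x - y‖ ≤ Real.sqrt n := by
  rw [EuclideanSpace.norm_eq]
  apply Real.sqrt_le_sqrt
  have : ∀ i, ‖(x - y) i‖ ^ 2 ≤ 1 := by
    intro i
    have h1 := hx i; have h2 := hy i
    simp only [Set.mem_Ioo] at h1 h2
    have : (x - y) i = x i - y i := by simp [PiLp.sub_apply]
    rw [this, Real.norm_eq_abs, sq_abs]
    nlinarith
  calc ∑ i, ‖(x - y) i‖ ^ 2 ≤ ∑ _i : Fin n, (1:ℝ) := Finset.sum_le_sum fun i _ => this i
  _ = n := by simp

lemma ind_form {S : Set (Euc n)} (hS : MeasurableSet S) (g : Euc n → ℝ≥0∞) :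
    ∫⁻ y in S, g y = ∫⁻ y, S.indicator 1 y * g y := by
  rw [← lintegral_indicator hS]
  apply lintegral_congr; intro y
  by_cases hy : y ∈ S <;> simp [hy]

lemma iter_add (f g : Euc n → Euc n → ℝ≥0∞)
    (hf : Measurable (fun p : Euc n × Euc n => f p.1 p.2))
    (hg : Measurable (fun p : Euc n × Euc n => g p.1 p.2)) :
    ∫⁻ x, ∫⁻ y, (f x y + g x y) = (∫⁻ x, ∫⁻ y, f x y) + ∫⁻ x, ∫⁻ y, g x y := by
  have h1 : ∀ x, ∫⁻ y, (f x y + g x y) = (∫⁻ y, f x y) + ∫⁻ y, g x y := by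
    intro x
    have hfx : Measurable fun y => f x y := hf.comp measurable_prodMk_left
    exact lintegral_add_left hfx _
  simp_rw [h1]
  have hF : Measurable fun x => ∫⁻ y, f x y := hf.lintegral_prod_right'
  exact lintegral_add_left hF _

lemma scale_change (x : Euc n) {g : Euc n → ℝ≥0∞} (hg : Measurable g) :
    ∫⁻ y, g y = (2:ℝ≥0∞)^n * ∫⁻ z, g ((2:ℝ)•z - x) := by
  have h2 : ((2:ℝ)^n)⁻¹ ≠ 0 := by positivity
  have he : (fun z : Euc n => (2:ℝ)•z - x) = (fun w => w + (-x)) ∘ (fun z : Euc n => (2:ℝ)•z) := by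
    funext z; simp [sub_eq_add_neg]
  have hmeas : Measurable (fun z : Euc n => (2:ℝ)•z - x) :=
    (measurable_id.const_smul (2:ℝ)).sub measurable_const
  have hsm : Measurable fun z : Euc n => (2:ℝ) • z := measurable_id.const_smul (2:ℝ)
  have hmap : Measure.map (fun z : Euc n => (2:ℝ)•z - x) volume
      = (ENNReal.ofReal ((2:ℝ)^n)⁻¹) • volume := by
    rw [he, ← Measure.map_map (measurable_add_const (-x)) hsm]
    have hsc : Measure.map (fun z : Euc n => (2:ℝ)•z) volume
        = (ENNReal.ofReal ((2:ℝ)^n)⁻¹) • volume := by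
      have h := Measure.map_addHaar_smul (volume : Measure (Euc n)) (r := 2) two_ne_zero
      rw [finrank_euclideanSpace_fin] at h
      have habs : |((2:ℝ)^n)⁻¹| = ((2:ℝ)^n)⁻¹ := abs_of_nonneg (by positivity)
      rw [habs] at h
      exact h
    rw [hsc, Measure.map_smul, map_add_right_eq_self]
  have key : ∫⁻ y, g y ∂(Measure.map (fun z : Euc n => (2:ℝ)•z - x) volume)
      = ∫⁻ z, g ((2:ℝ)•z - x) := lintegral_map hg hmeas
  rw [hmap, lintegral_smul_measure] at key
  have hc : ENNReal.ofReal ((2:ℝ)^n)⁻¹ = ((2:ℝ≥0∞)^n)⁻¹ := by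
    rw [ENNReal.ofReal_inv_of_pos (by positivity), ENNReal.ofReal_pow (by norm_num)]
    norm_num
  rw [hc] at key
  rw [← key, smul_eq_mul, ← mul_assoc, ENNReal.mul_inv_cancel (pow_ne_zero _ (by norm_num)) (ENNReal.pow_ne_top (by norm_num)), one_mul]

lemma md_symm (x y : Euc n) : (2:ℝ)⁻¹ • (y + x) = (2:ℝ)⁻¹ • (x + y) := by rw [add_comm]

lemma Jd_double (u : Euc n → ℝ) (hu : Measurable u) (r : ℝ) :
    Jd n u (2*r) ≤ 2^(n+1) * Jd n u r := by
  set md : Euc n → Euc n → Euc n := fun x y => (2:ℝ)⁻¹ • (x + y) with hmd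
  have hmdm : Measurable (fun p : Euc n × Euc n => md p.1 p.2) :=
    by simp only [hmd]; fun_prop
  have hP : Measurable (fun p : Euc n × Euc n => eQ n p.1 * eQ n p.2 * eB n (2*r) (p.1 - p.2)) :=
    ((eQ_meas.comp measurable_fst).mul (eQ_meas.comp measurable_snd)).mul
      ((eB_meas _).comp (measurable_fst.sub measurable_snd))
  have hf1 : Measurable (fun p : Euc n × Euc n =>
      (eQ n p.1 * eQ n p.2 * eB n (2*r) (p.1 - p.2)) * dd u p.1 (md p.1 p.2)) :=
    hP.mul (ENNReal.measurable_ofReal.comp (((hu.comp measurable_fst).sub (hu.comp hmdm)).abs))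
  have hf2 : Measurable (fun p : Euc n × Euc n =>
      (eQ n p.1 * eQ n p.2 * eB n (2*r) (p.1 - p.2)) * dd u (md p.1 p.2) p.2) :=
    hP.mul (ENNReal.measurable_ofReal.comp (((hu.comp hmdm).sub (hu.comp measurable_snd)).abs))
  have tri : ∀ x y : Euc n, dd u x y ≤ dd u x (md x y) + dd u (md x y) y := by
    intro x y
    unfold dd
    calc ENNReal.ofReal |u x - u y|
        ≤ ENNReal.ofReal (|u x - u (md x y)| + |u (md x y) - u y|) :=
          ENNReal.ofReal_le_ofReal (abs_sub_le _ _ _)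
      _ = _ := ENNReal.ofReal_add (abs_nonneg _) (abs_nonneg _)
  have step1 : Jd n u (2*r) ≤
      (∫⁻ x, ∫⁻ y, (eQ n x * eQ n y * eB n (2*r) (x - y)) * dd u x (md x y))
      + ∫⁻ x, ∫⁻ y, (eQ n x * eQ n y * eB n (2*r) (x - y)) * dd u (md x y) y := by
    rw [← iter_add _ _ hf1 hf2]
    refine lintegral_mono fun x => lintegral_mono fun y => ?_
    rw [← mul_add]
    exact mul_le_mul_right (tri x y) _
  have swap : (∫⁻ x, ∫⁻ y, (eQ n x * eQ n y * eB n (2*r) (x - y)) * dd u (md x y) y)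
      = ∫⁻ x, ∫⁻ y, (eQ n x * eQ n y * eB n (2*r) (x - y)) * dd u x (md x y) := by
    rw [lintegral_lintegral_swap hf2.aemeasurable]
    refine lintegral_congr fun a => lintegral_congr fun b => ?_
    have h1 : md b a = md a b := by rw [hmd]; exact md_symm a b
    rw [eB_symm, dd_symm, h1]
    ring
  have key : ∀ x : Euc n,
      (∫⁻ y, (eQ n x * eQ n y * eB n (2*r) (x - y)) * dd u x (md x y))
        ≤ (2:ℝ≥0∞)^n * ∫⁻ z, (eQ n x * eQ n z * eB n r (x - z)) * dd u x z := by
    intro x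
    by_cases hx : x ∈ Qcube n
    · set g : Euc n → ℝ≥0∞ := fun y => (eQ n x * eQ n y * eB n (2*r) (x - y)) * dd u x (md x y)
        with hgdef
      have hg : Measurable g :=
        ((measurable_const.mul eQ_meas).mul
            ((eB_meas _).comp (measurable_const.sub measurable_id))).mul
          (ENNReal.measurable_ofReal.comp
            ((measurable_const.sub
              (hu.comp ((measurable_const.add measurable_id).const_smul ((2:ℝ)⁻¹)))).abs))
      rw [scale_change x hg]
      refine mul_le_mul_right (lintegral_mono fun z => ?_) _
      have hB : eB n (2*r) (x - ((2:ℝ)•z - x)) = eB n r (x - z) := by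
        have h : x - ((2:ℝ)•z - x) = (2:ℝ)•(x - z) := by module
        rw [h, eB_two]
      have hmdz : md x ((2:ℝ)•z - x) = z := by
        show (2:ℝ)⁻¹ • (x + ((2:ℝ)•z - x)) = z
        module
      show (eQ n x * eQ n ((2:ℝ)•z-x) * eB n (2*r) (x - ((2:ℝ)•z-x)))
          * dd u x (md x ((2:ℝ)•z-x)) ≤ (eQ n x * eQ n z * eB n r (x - z)) * dd u x z
      rw [hB, hmdz]
      refine mul_le_mul_left (mul_le_mul_left (mul_le_mul_right ?_ _) _) _
      by_cases hz : (2:ℝ)•z - x ∈ Qcube n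
      · rw [eQ_of_mem hz, eQ_of_mem (mem_of_two_smul hx hz)]
      · rw [eQ_of_not_mem hz]; exact zero_le
    · simp [eQ_of_not_mem hx]
  have first_bound : (∫⁻ x, ∫⁻ y, (eQ n x * eQ n y * eB n (2*r) (x - y)) * dd u x (md x y))
      ≤ 2^n * Jd n u r := by
    calc (∫⁻ x, ∫⁻ y, (eQ n x * eQ n y * eB n (2*r) (x - y)) * dd u x (md x y))
        ≤ ∫⁻ x, (2:ℝ≥0∞)^n * ∫⁻ z, (eQ n x * eQ n z * eB n r (x - z)) * dd u x z :=
          lintegral_mono key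
      _ = 2^n * Jd n u r := by
          rw [lintegral_const_mul' _ _ (ENNReal.pow_ne_top (by norm_num))]
          rfl
  calc Jd n u (2*r)
      ≤ (∫⁻ x, ∫⁻ y, (eQ n x * eQ n y * eB n (2*r) (x - y)) * dd u x (md x y))
        + ∫⁻ x, ∫⁻ y, (eQ n x * eQ n y * eB n (2*r) (x - y)) * dd u (md x y) y := step1
    _ = 2 * (∫⁻ x, ∫⁻ y, (eQ n x * eQ n y * eB n (2*r) (x - y)) * dd u x (md x y)) := by
        rw [swap]; exact (two_mul _).symm
    _ ≤ 2 * (2^n * Jd n u r) := mul_le_mul_right first_bound _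
    _ = 2^(n+1) * Jd n u r := by rw [pow_succ, mul_comm ((2:ℝ≥0∞)^n) 2, mul_assoc]

lemma Jd_pow (u : Euc n → ℝ) (hu : Measurable u) (r : ℝ) (k : ℕ) :
    Jd n u (2^k * r) ≤ 2^((n+1)*k) * Jd n u r := by
  induction k with
  | zero => simp
  | succ k ih =>
      have h1 : (2:ℝ)^(k+1) * r = 2 * (2^k * r) := by ring
      rw [h1]
      calc Jd n u (2 * (2^k * r)) ≤ 2^(n+1) * Jd n u (2^k * r) := Jd_double u hu _
        _ ≤ 2^(n+1) * (2^((n+1)*k) * Jd n u r) := mul_le_mul_right ih _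
        _ = 2^((n+1)*(k+1)) * Jd n u r := by rw [← mul_assoc, ← pow_add]; ring_nf

lemma convFull (f : Euc n → Euc n → ℝ≥0∞) :
    (∫⁻ x in Qcube n, ∫⁻ y in Qcube n, f x y) = ∫⁻ x, ∫⁻ y, (eQ n x * eQ n y) * f x y := by
  rw [ind_form measQ]
  refine lintegral_congr fun x => ?_
  rw [ind_form measQ (f x),
    ← lintegral_const_mul' ((Qcube n).indicator 1 x) _ (eQ_ne_top x)]
  refine lintegral_congr fun y => ?_
  show eQ n x * (eQ n y * f x y) = (eQ n x * eQ n y) * f x y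
  ring

lemma convBall (f : Euc n → Euc n → ℝ≥0∞) (r : ℝ) :
    (∫⁻ x in Qcube n, ∫⁻ y in Qcube n ∩ Metric.ball x r, f x y)
      = ∫⁻ x, ∫⁻ y, (eQ n x * eQ n y * eB n r (x - y)) * f x y := by
  rw [ind_form measQ]
  refine lintegral_congr fun x => ?_
  rw [ind_form (measQ.inter measurableSet_ball) (f x),
    ← lintegral_const_mul' ((Qcube n).indicator 1 x) _ (eQ_ne_top x)]
  refine lintegral_congr fun y => ?_
  have hind : (Qcube n ∩ Metric.ball x r).indicator (1 : Euc n → ℝ≥0∞) y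
      = eQ n y * eB n r (x - y) := by
    by_cases hy : y ∈ Qcube n
    · by_cases hb : ‖x - y‖ < r
      · have hmem : y ∈ Qcube n ∩ Metric.ball x r :=
          ⟨hy, by rw [mem_ball, dist_eq_norm, norm_sub_rev]; exact hb⟩
        simp [Set.indicator_of_mem hmem, eQ_of_mem hy, eB_of_lt hb]
      · have hmem : y ∉ Qcube n ∩ Metric.ball x r := by
          intro h
          have := mem_ball.1 h.2
          rw [dist_eq_norm, norm_sub_rev] at this
          exact hb this
        simp [Set.indicator_of_notMem hmem, eB_of_not_lt hb]
    · have hmem : y ∉ Qcube n ∩ Metric.ball x r := fun h => hy h.1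
      simp [Set.indicator_of_notMem hmem, eQ_of_not_mem hy]
  rw [hind]
  show eQ n x * (eQ n y * eB n r (x - y) * f x y) = (eQ n x * eQ n y * eB n r (x - y)) * f x y
  ring

end SRI

open SRI

/-- Norms subject to short-range interactions. -/
theorem short_range_interaction_norm_equivalence
    (n : ℕ) (hn : 1 ≤ n) (s δ : ℝ) (hs0 : 0 < s) (hs : s < 1 / 2) (hδ : 0 < δ) :
    ∃ C : ℝ, 0 < C ∧
      ∀ u : Euc n → ℝ, Measurable u → IntegrableOn u (Qcube n) →
        (∫ x in Qcube n, u x) = 0 →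
        (∫⁻ x in Qcube n, ∫⁻ y in Qcube n,
            ENNReal.ofReal (|u x - u y| / ‖x - y‖ ^ ((n : ℝ) + 2 * s)))
          ≤ ENNReal.ofReal C *
            ∫⁻ x in Qcube n, ∫⁻ y in Qcube n ∩ Metric.ball x δ,
              ENNReal.ofReal (|u x - u y| / ‖x - y‖ ^ ((n : ℝ) + 2 * s)) := by
  classical
  obtain ⟨k, hk⟩ := pow_unbounded_of_one_lt (Real.sqrt n / δ) (one_lt_two)
  have hsn : Real.sqrt n < 2^k * δ := by
    rw [div_lt_iff₀ hδ] at hk; linarith [hk]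
  refine ⟨1 + 2^((n+1)*k), by positivity, ?_⟩
  intro u hu _ _
  set p : ℝ := (n:ℝ) + 2*s with hpdef
  have hp0 : 0 < p := by
    have : (0:ℝ) ≤ (n:ℝ) := Nat.cast_nonneg n
    rw [hpdef]; linarith
  have hdp0 : (0:ℝ) < δ ^ p := Real.rpow_pos_of_pos hδ p
  -- measurability facts
  have habs : Measurable fun q : Euc n × Euc n => |u q.1 - u q.2| :=
    ((hu.comp measurable_fst).sub (hu.comp measurable_snd)).abs
  have hWm : Measurable fun q : Euc n × Euc n =>
      ENNReal.ofReal (|u q.1 - u q.2| / ‖q.1 - q.2‖ ^ p) :=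
    ENNReal.measurable_ofReal.comp
      (habs.div ((Real.continuous_rpow_const hp0.le).measurable.comp
        (measurable_fst.sub measurable_snd).norm))
  have hddm : Measurable fun q : Euc n × Euc n => dd u q.1 q.2 :=
    ENNReal.measurable_ofReal.comp habs
  have hPm : ∀ r : ℝ, Measurable fun q : Euc n × Euc n =>
      eQ n q.1 * eQ n q.2 * eB n r (q.1 - q.2) := fun r =>
    ((eQ_meas.comp measurable_fst).mul (eQ_meas.comp measurable_snd)).mul
      ((eB_meas _).comp (measurable_fst.sub measurable_snd))
  -- rewrite both sides in indicator form
  have hA := convFull (n := n) (fun a b => ENNReal.ofReal (|u a - u b| / ‖a - b‖ ^ p))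
  have hB := convBall (n := n) (fun a b => ENNReal.ofReal (|u a - u b| / ‖a - b‖ ^ p)) δ
  rw [hA, hB]
  set B : ℝ≥0∞ := ∫⁻ x, ∫⁻ y, (eQ n x * eQ n y * eB n δ (x - y))
      * ENNReal.ofReal (|u x - u y| / ‖x - y‖ ^ p) with hBdef
  -- pointwise claim 1
  have claim1 : ∀ x y : Euc n,
      (eQ n x * eQ n y) * ENNReal.ofReal (|u x - u y| / ‖x - y‖ ^ p)
        ≤ (eQ n x * eQ n y * eB n δ (x - y)) * ENNReal.ofReal (|u x - u y| / ‖x - y‖ ^ p)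
          + ENNReal.ofReal (δ^p)⁻¹ * ((eQ n x * eQ n y) * dd u x y) := by
    intro x y
    by_cases hlt : ‖x - y‖ < δ
    · rw [eB_of_lt hlt, mul_one]
      exact self_le_add_right _ _
    · have hδle : δ ≤ ‖x - y‖ := not_lt.1 hlt
      have h1 : |u x - u y| / ‖x - y‖ ^ p ≤ (δ^p)⁻¹ * |u x - u y| := by
        rw [div_eq_inv_mul]
        refine mul_le_mul_of_nonneg_right ?_ (abs_nonneg _)
        exact inv_anti₀ hdp0 (Real.rpow_le_rpow hδ.le hδle hp0.le)
      calc (eQ n x * eQ n y) * ENNReal.ofReal (|u x - u y| / ‖x - y‖ ^ p)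
          ≤ (eQ n x * eQ n y) * ENNReal.ofReal ((δ^p)⁻¹ * |u x - u y|) :=
            mul_le_mul_right (ENNReal.ofReal_le_ofReal h1) _
        _ = ENNReal.ofReal (δ^p)⁻¹ * ((eQ n x * eQ n y) * dd u x y) := by
            rw [ENNReal.ofReal_mul (inv_nonneg.2 hdp0.le)]
            unfold dd; ring
        _ ≤ _ := self_le_add_left _ _
  -- pointwise claim 2
  have claim2 : ∀ x y : Euc n,
      (eQ n x * eQ n y * eB n δ (x - y)) * dd u x y
        ≤ ENNReal.ofReal (δ^p) * ((eQ n x * eQ n y * eB n δ (x - y))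
            * ENNReal.ofReal (|u x - u y| / ‖x - y‖ ^ p)) := by
    intro x y
    by_cases hlt : ‖x - y‖ < δ
    · by_cases hxy : x = y
      · subst hxy; simp [dd]
      · have hpos : 0 < ‖x - y‖ := by
          rw [norm_pos_iff]; exact sub_ne_zero.2 hxy
        have htpos : 0 < ‖x - y‖ ^ p := Real.rpow_pos_of_pos hpos p
        have h2 : |u x - u y| ≤ δ^p * (|u x - u y| / ‖x - y‖ ^ p) := by
          have ht : ‖x - y‖ ^ p ≤ δ^p := Real.rpow_le_rpow (norm_nonneg _) hlt.le hp0.le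
          calc |u x - u y| = (|u x - u y| / ‖x - y‖ ^ p) * (‖x - y‖ ^ p) :=
                (div_mul_cancel₀ _ htpos.ne').symm
            _ ≤ (|u x - u y| / ‖x - y‖ ^ p) * δ^p :=
                mul_le_mul_of_nonneg_left ht (by positivity)
            _ = δ^p * (|u x - u y| / ‖x - y‖ ^ p) := mul_comm _ _
        calc (eQ n x * eQ n y * eB n δ (x - y)) * dd u x y
            ≤ (eQ n x * eQ n y * eB n δ (x - y))
              * ENNReal.ofReal (δ^p * (|u x - u y| / ‖x - y‖ ^ p)) :=
              mul_le_mul_right (ENNReal.ofReal_le_ofReal h2) _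
          _ = _ := by rw [ENNReal.ofReal_mul hdp0.le]; ring
    · rw [eB_of_not_lt hlt]; simp
  -- split
  have hsplit : (∫⁻ x, ∫⁻ y, (eQ n x * eQ n y)
        * ENNReal.ofReal (|u x - u y| / ‖x - y‖ ^ p))
      ≤ B + ENNReal.ofReal (δ^p)⁻¹ * ∫⁻ x, ∫⁻ y, (eQ n x * eQ n y) * dd u x y := by
    have hmf : Measurable fun q : Euc n × Euc n =>
        (eQ n q.1 * eQ n q.2 * eB n δ (q.1 - q.2))
          * ENNReal.ofReal (|u q.1 - u q.2| / ‖q.1 - q.2‖ ^ p) := (hPm δ).mul hWm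
    have hmg : Measurable fun q : Euc n × Euc n =>
        ENNReal.ofReal (δ^p)⁻¹ * ((eQ n q.1 * eQ n q.2) * dd u q.1 q.2) :=
      measurable_const.mul
        (((eQ_meas.comp measurable_fst).mul (eQ_meas.comp measurable_snd)).mul hddm)
    calc (∫⁻ x, ∫⁻ y, (eQ n x * eQ n y) * ENNReal.ofReal (|u x - u y| / ‖x - y‖ ^ p))
        ≤ ∫⁻ x, ∫⁻ y, ((eQ n x * eQ n y * eB n δ (x - y))
              * ENNReal.ofReal (|u x - u y| / ‖x - y‖ ^ p)
            + ENNReal.ofReal (δ^p)⁻¹ * ((eQ n x * eQ n y) * dd u x y)) :=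
          lintegral_mono fun x => lintegral_mono fun y => claim1 x y
      _ = B + ∫⁻ x, ∫⁻ y, ENNReal.ofReal (δ^p)⁻¹ * ((eQ n x * eQ n y) * dd u x y) :=
          iter_add _ _ hmf hmg
      _ = B + ENNReal.ofReal (δ^p)⁻¹ * ∫⁻ x, ∫⁻ y, (eQ n x * eQ n y) * dd u x y := by
          congr 1
          have h1 : ∀ x : Euc n, (∫⁻ y, ENNReal.ofReal (δ^p)⁻¹ * ((eQ n x * eQ n y) * dd u x y))
              = ENNReal.ofReal (δ^p)⁻¹ * ∫⁻ y, (eQ n x * eQ n y) * dd u x y := fun x =>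
            lintegral_const_mul' _ _ ENNReal.ofReal_ne_top
          simp_rw [h1]
          exact lintegral_const_mul' _ _ ENNReal.ofReal_ne_top
  -- full double integral equals Jd at large radius
  have hIfull : (∫⁻ x, ∫⁻ y, (eQ n x * eQ n y) * dd u x y) = Jd n u (2^k * δ) := by
    refine lintegral_congr fun x => lintegral_congr fun y => ?_
    by_cases hx : x ∈ Qcube n
    · by_cases hy : y ∈ Qcube n
      · rw [eB_of_lt (lt_of_le_of_lt (norm_le_sqrt hx hy) hsn), mul_one]
      · simp [eQ_of_not_mem hy]
    · simp [eQ_of_not_mem hx]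
  have hchain : Jd n u ((2:ℝ)^k * δ) ≤ 2^((n+1)*k) * Jd n u δ := Jd_pow u hu δ k
  have hJδ : Jd n u δ ≤ ENNReal.ofReal (δ^p) * B := by
    calc Jd n u δ
        ≤ ∫⁻ x, ∫⁻ y, ENNReal.ofReal (δ^p) * ((eQ n x * eQ n y * eB n δ (x - y))
            * ENNReal.ofReal (|u x - u y| / ‖x - y‖ ^ p)) :=
          lintegral_mono fun x => lintegral_mono fun y => claim2 x y
      _ = ENNReal.ofReal (δ^p) * B := by
          have h1 : ∀ x : Euc n, (∫⁻ y, ENNReal.ofReal (δ^p) * ((eQ n x * eQ n y * eB n δ (x - y))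
                * ENNReal.ofReal (|u x - u y| / ‖x - y‖ ^ p)))
              = ENNReal.ofReal (δ^p) * ∫⁻ y, (eQ n x * eQ n y * eB n δ (x - y))
                * ENNReal.ofReal (|u x - u y| / ‖x - y‖ ^ p) := fun x =>
            lintegral_const_mul' _ _ ENNReal.ofReal_ne_top
          simp_rw [h1]
          rw [hBdef]
          exact lintegral_const_mul' _ _ ENNReal.ofReal_ne_top
  have hone : ENNReal.ofReal (δ^p)⁻¹ * ENNReal.ofReal (δ^p) = 1 := by
    rw [← ENNReal.ofReal_mul (inv_nonneg.2 hdp0.le), inv_mul_cancel₀ hdp0.ne', ENNReal.ofReal_one]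
  calc (∫⁻ x, ∫⁻ y, (eQ n x * eQ n y) * ENNReal.ofReal (|u x - u y| / ‖x - y‖ ^ p))
      ≤ B + ENNReal.ofReal (δ^p)⁻¹ * ∫⁻ x, ∫⁻ y, (eQ n x * eQ n y) * dd u x y := hsplit
    _ = B + ENNReal.ofReal (δ^p)⁻¹ * Jd n u ((2:ℝ)^k * δ) := by rw [hIfull]
    _ ≤ B + ENNReal.ofReal (δ^p)⁻¹ * (2^((n+1)*k) * Jd n u δ) := by
        exact add_le_add_right (mul_le_mul_right hchain _) _
    _ ≤ B + ENNReal.ofReal (δ^p)⁻¹ * (2^((n+1)*k) * (ENNReal.ofReal (δ^p) * B)) := by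
        exact add_le_add_right (mul_le_mul_right (mul_le_mul_right hJδ _) _) _
    _ = B + (ENNReal.ofReal (δ^p)⁻¹ * ENNReal.ofReal (δ^p)) * (2^((n+1)*k) * B) := by ring
    _ = (1 + 2^((n+1)*k)) * B := by rw [hone]; ring
    _ = ENNReal.ofReal (1 + 2^((n+1)*k)) * B := by
        rw [ENNReal.ofReal_add (by norm_num) (by positivity), ENNReal.ofReal_one,
          ENNReal.ofReal_pow (by norm_num)]
        norm_num

end
end

section
/- Let K be an admissible kernel. Then there exists a constant C > 0, depending only on n, s₁, κ₁ and δ, such that for the ball B_r centered at the origin: P_K(B_r) ≥ C r^{n−2s₁} if 0 < r ≤ δ/4, and P_K(B_r) ≥ C r^{n−1} if r > δ/4. -/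
open MeasureTheory ENNReal Filter Metric
open scoped RealInnerProductSpace Pointwise Topology NNReal

noncomputable section

private lemma key_lb {n : ℕ} (K : Euc n → Euc n → ℝ) (r : ℝ)
    (A : Set (Euc n)) (hA : MeasurableSet A) (hAsub : A ⊆ Metric.ball (0:Euc n) r)
    (B : Euc n → Set (Euc n)) (hBm : ∀ x, MeasurableSet (B x))
    (hBsub : ∀ x ∈ A, B x ⊆ (Metric.ball (0:Euc n) r)ᶜ)
    (c : ℝ) (hc : ∀ x ∈ A, ∀ y ∈ B x, c ≤ K x y)
    (vb va : ℝ≥0∞) (hvb : ∀ x ∈ A, vb ≤ volume (B x)) (hva : va ≤ volume A) :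
    ENNReal.ofReal c * vb * va ≤
      ∫⁻ x in Metric.ball (0:Euc n) r, ∫⁻ y in (Metric.ball (0:Euc n) r)ᶜ,
        ENNReal.ofReal (K x y) := by
  calc ENNReal.ofReal c * vb * va ≤ ENNReal.ofReal c * vb * volume A := by gcongr
    _ = ∫⁻ _ in A, ENNReal.ofReal c * vb := (setLIntegral_const _ _).symm
    _ ≤ ∫⁻ x in A, ∫⁻ y in (Metric.ball (0:Euc n) r)ᶜ, ENNReal.ofReal (K x y) := by
        refine lintegral_mono_ae ?_
        filter_upwards [ae_restrict_mem hA] with x hx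
        calc ENNReal.ofReal c * vb ≤ ENNReal.ofReal c * volume (B x) := by
              gcongr; exact hvb x hx
          _ = ∫⁻ _ in B x, ENNReal.ofReal c := (setLIntegral_const _ _).symm
          _ ≤ ∫⁻ y in B x, ENNReal.ofReal (K x y) := by
              refine lintegral_mono_ae ?_
              filter_upwards [ae_restrict_mem (hBm x)] with y hy
              exact ENNReal.ofReal_le_ofReal (hc x hx y hy)
          _ ≤ _ := lintegral_mono_set (hBsub x hx)
    _ ≤ _ := lintegral_mono_set hAsub


set_option maxHeartbeats 2000000 in
/-- Isoperimetric lower bound for the kernel `K`. -/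
theorem isoperimetric_lower_bound
    (n : ℕ) (hn : 1 ≤ n) (s₁ s₂ δ κ₁ κ₂ κ₃ : ℝ)
    (K : Euc n → Euc n → ℝ) (hK : IsAdmissibleKernel n s₁ s₂ δ κ₁ κ₂ κ₃ K) :
    ∃ C : ℝ, 0 < C ∧
      ∀ r : ℝ,
        (0 < r → r ≤ δ / 4 →
          ENNReal.ofReal (C * r ^ ((n : ℝ) - 2 * s₁))
            ≤ ∫⁻ x in Metric.ball (0 : Euc n) r,
                ∫⁻ y in (Metric.ball (0 : Euc n) r)ᶜ, ENNReal.ofReal (K x y)) ∧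
        (δ / 4 < r →
          ENNReal.ofReal (C * r ^ ((n : ℝ) - 1))
            ≤ ∫⁻ x in Metric.ball (0 : Euc n) r,
                ∫⁻ y in (Metric.ball (0 : Euc n) r)ᶜ, ENNReal.ofReal (K x y)) := by
  have hs₁ := hK.s₁_pos
  have hδ0 := hK.δ_pos
  have hκ₁ := hK.κ₁_pos
  have hlow := hK.lower
  haveI : Nonempty (Fin n) := ⟨⟨0, hn⟩⟩
  set e : Euc n := EuclideanSpace.single (⟨0, hn⟩ : Fin n) (1:ℝ) with he
  have hne : ‖e‖ = 1 := by rw [he, EuclideanSpace.norm_single]; norm_num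
  set V := volume (ball (0:Euc n) 1) with hVdef
  have hV0 : V ≠ 0 := (measure_ball_pos _ _ one_pos).ne'
  have hVt : V ≠ ⊤ := measure_ball_lt_top.ne
  set v := V.toReal with hvdef
  have hv : 0 < v := ENNReal.toReal_pos hV0 hVt
  have hVeq : V = ENNReal.ofReal v := (ENNReal.ofReal_toReal hVt).symm
  have hvol : ∀ (x : Euc n) (t : ℝ), 0 ≤ t →
      volume (ball x t) = ENNReal.ofReal (t ^ n) * V := by
    intro x t ht
    rw [hVdef, Measure.addHaar_ball volume x ht, finrank_euclideanSpace_fin]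
  set p := (n:ℝ) + 2 * s₁ with hpdef
  have hp : 0 < p := by positivity
  have h3p : (0:ℝ) < (3:ℝ) ^ p := Real.rpow_pos_of_pos (by norm_num) p
  have hδp : (0:ℝ) < δ ^ p := Real.rpow_pos_of_pos hδ0 p
  set C₁ := κ₁ * v^2 * (1/8)^n / (3:ℝ)^p with hC₁def
  have hC₁ : 0 < C₁ := by positivity
  set C₂ := κ₁ / δ^p * ((δ/32)^n * v) * (δ/16 * v) with hC₂def
  have hC₂ : 0 < C₂ := by positivity
  have hprod : ∀ a b c : ℝ, 0 ≤ a → 0 ≤ b → 0 ≤ c →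
      ENNReal.ofReal a * (ENNReal.ofReal b * V) * (ENNReal.ofReal c * V)
        = ENNReal.ofReal (a * (b * v) * (c * v)) := by
    intro a b c ha hb hc
    rw [hVeq, ← ENNReal.ofReal_mul hb, ← ENNReal.ofReal_mul ha,
      ← ENNReal.ofReal_mul hc, ← ENNReal.ofReal_mul (by positivity)]
  refine ⟨min C₁ C₂, lt_min hC₁ hC₂, fun r => ⟨?_, ?_⟩⟩
  · -- small radii
    intro hr hrδ
    have hgeom : ∀ x ∈ ball (0:Euc n) (r/2), ∀ y ∈ ball (x + (5*r/2) • e) (r/4),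
        9*r/4 ≤ ‖y - x‖ ∧ ‖y - x‖ ≤ 11*r/4 ∧ r ≤ ‖y‖ := by
      intro x hx y hy
      have hx' : ‖x‖ < r/2 := by simpa using mem_ball_zero_iff.mp hx
      have hy' : ‖y - (x + (5*r/2) • e)‖ < r/4 := by
        rw [← dist_eq_norm]; exact mem_ball.mp hy
      have hq : ‖(5*r/2) • e‖ = 5*r/2 := by
        rw [norm_smul, hne, mul_one, Real.norm_eq_abs, abs_of_pos (by linarith)]
      have hvec : y - x = (5*r/2) • e + (y - (x + (5*r/2) • e)) := by abel
      have hlow1 : 5*r/2 - r/4 ≤ ‖y - x‖ := by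
        have h := norm_sub_norm_le ((5*r/2) • e) (-(y - (x + (5*r/2) • e)))
        rw [sub_neg_eq_add, norm_neg, hq, ← hvec] at h
        linarith
      have hup1 : ‖y - x‖ ≤ 11*r/4 := by
        rw [hvec]
        have := norm_add_le ((5*r/2) • e) (y - (x + (5*r/2) • e))
        rw [hq] at this; linarith
      have hy2 : r ≤ ‖y‖ := by
        have := norm_sub_le y x
        have h2 := norm_sub_norm_le y x
        linarith
      exact ⟨by linarith, hup1, hy2⟩
    have hbody := key_lb K r (ball (0:Euc n) (r/2)) measurableSet_ball
      (ball_subset_ball (by linarith))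
      (fun x => ball (x + (5*r/2) • e) (r/4)) (fun _ => measurableSet_ball)
      (fun x hx y hy => by
        simp only [Set.mem_compl_iff, mem_ball, dist_zero_right, not_lt]
        exact (hgeom x hx y hy).2.2)
      (κ₁ / (3*r)^p)
      (fun x hx y hy => by
        obtain ⟨hl, hu, -⟩ := hgeom x hx y hy
        have hxy : ‖x - y‖ = ‖y - x‖ := norm_sub_rev x y
        have h0 : 0 < ‖x - y‖ := by rw [hxy]; linarith
        have hδ' : ‖x - y‖ < δ := by rw [hxy]; linarith
        refine le_trans ?_ (hlow x y h0 hδ')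
        have h1 : ‖x - y‖ ^ p ≤ (3*r) ^ p :=
          Real.rpow_le_rpow (norm_nonneg _) (by rw [hxy]; linarith) hp.le
        have h2 : 0 < ‖x - y‖ ^ p := Real.rpow_pos_of_pos h0 p
        gcongr)
      (ENNReal.ofReal ((r/4)^n) * V) (ENNReal.ofReal ((r/2)^n) * V)
      (fun x _ => le_of_eq (hvol _ _ (by linarith)).symm)
      (le_of_eq (hvol _ _ (by linarith)).symm)
    refine le_trans ?_ hbody
    rw [hprod _ _ _ (div_nonneg hκ₁.le (Real.rpow_nonneg (by linarith) p))
      (pow_nonneg (by linarith) n) (pow_nonneg (by linarith) n)]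
    apply ENNReal.ofReal_le_ofReal
    have hrp : (0:ℝ) < r ^ p := Real.rpow_pos_of_pos hr p
    have hrw : κ₁/(3*r)^p * ((r/4)^n * v) * ((r/2)^n * v) = C₁ * r^((n:ℝ)-2*s₁) := by
      have e1 : (3*r)^p = 3^p * r^p := Real.mul_rpow (by norm_num) hr.le
      have e3 : r^((n:ℝ)) * r^((n:ℝ)) / r^p = r^((n:ℝ)-2*s₁) := by
        rw [← Real.rpow_add hr, ← Real.rpow_sub hr]
        congr 1
        rw [hpdef]
        try ring
      calc κ₁/(3*r)^p * ((r/4)^n * v) * ((r/2)^n * v)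
          = (κ₁ * v^2 * (1/8)^n / 3^p) * ((r:ℝ)^((n:ℝ)) * r^((n:ℝ)) / r^p) := by
            rw [e1, Real.rpow_natCast]
            have h8 : (8:ℝ)^n = 2^n * 4^n := by rw [← mul_pow]; norm_num
            field_simp
            rw [div_pow, div_pow, one_div_pow, h8]
            ring
        _ = C₁ * r^((n:ℝ)-2*s₁) := by rw [e3, hC₁def]
    rw [hrw]
    exact mul_le_mul_of_nonneg_right (min_le_left _ _) (Real.rpow_nonneg hr.le _)
  · -- large radii
    intro hr4
    have hr : 0 < r := by linarith
    set A : Set (Euc n) := ball (0:Euc n) r \ closedBall (0:Euc n) (r - δ/8) with hAdef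
    set B : Euc n → Set (Euc n) := fun x => ball (((r + δ/16)/‖x‖) • x) (δ/32) with hBdef
    have hgeom : ∀ x ∈ A, ∀ y ∈ B x, r < ‖y‖ ∧ 0 < ‖x - y‖ ∧ ‖x - y‖ < δ := by
      intro x hx y hy
      obtain ⟨hx1, hx2⟩ := hx
      have hx1' : ‖x‖ < r := by simpa using mem_ball_zero_iff.mp hx1
      have hx2' : r - δ/8 < ‖x‖ := by
        have := hx2
        simp only [mem_closedBall, dist_zero_right, not_le] at this
        exact this
      have hxpos : 0 < ‖x‖ := by linarith
      set q : Euc n := ((r + δ/16)/‖x‖) • x with hqdef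
      have hy' : ‖y - q‖ < δ/32 := by rw [← dist_eq_norm]; exact mem_ball.mp hy
      have hqn : ‖q‖ = r + δ/16 := by
        rw [hqdef, norm_smul, Real.norm_eq_abs, abs_of_pos (by positivity),
          div_mul_cancel₀ _ hxpos.ne']
      have hqx : ‖q - x‖ = r + δ/16 - ‖x‖ := by
        have : q - x = ((r + δ/16)/‖x‖ - 1) • x := by
          rw [sub_smul, one_smul, hqdef]
        rw [this, norm_smul, Real.norm_eq_abs, abs_of_nonneg
          (by rw [le_sub_iff_add_le, zero_add, le_div_iff₀ hxpos, one_mul]; linarith),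
          sub_mul, one_mul, div_mul_cancel₀ _ hxpos.ne']
      have hyn : r < ‖y‖ := by
        have h1 := norm_sub_norm_le q y
        rw [norm_sub_rev q y] at h1
        rw [hqn] at h1
        linarith
      have hxy : ‖x - y‖ < δ := by
        have h1 : ‖x - y‖ ≤ ‖x - q‖ + ‖q - y‖ := by
          have := dist_triangle x q y
          simpa [dist_eq_norm] using this
        rw [norm_sub_rev x q, hqx, norm_sub_rev q y] at h1
        linarith
      have hxy0 : 0 < ‖x - y‖ := by
        rw [norm_sub_pos_iff]
        intro h
        rw [h] at hx1'
        linarith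
      exact ⟨hyn, hxy0, hxy⟩
    have hbody := key_lb K r A (measurableSet_ball.diff measurableSet_closedBall)
      Set.diff_subset B (fun x => measurableSet_ball)
      (fun x hx y hy => by
        simp only [Set.mem_compl_iff, mem_ball, dist_zero_right, not_lt]
        exact (hgeom x hx y hy).1.le)
      (κ₁ / δ^p)
      (fun x hx y hy => by
        obtain ⟨-, h0, hδ'⟩ := hgeom x hx y hy
        refine le_trans ?_ (hlow x y h0 hδ')
        have h1 : ‖x - y‖ ^ p ≤ δ ^ p :=
          Real.rpow_le_rpow (norm_nonneg _) hδ'.le hp.le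
        have h2 : 0 < ‖x - y‖ ^ p := Real.rpow_pos_of_pos h0 p
        gcongr)
      (ENNReal.ofReal ((δ/32)^n) * V) (ENNReal.ofReal (δ/16 * r^(n-1)) * V)
      (fun x _ => le_of_eq (hvol _ _ (by linarith)).symm)
      ?_
    · refine le_trans ?_ hbody
      rw [hprod _ _ _ (div_nonneg hκ₁.le hδp.le)
        (pow_nonneg (by linarith) n)
        (mul_nonneg (by linarith) (pow_nonneg hr.le _))]
      apply ENNReal.ofReal_le_ofReal
      have hcast : ((n:ℝ) - 1) = ((n - 1 : ℕ) : ℝ) := by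
        rw [Nat.cast_sub hn]; norm_num
      have hre : r ^ ((n:ℝ) - 1) = r ^ (n - 1 : ℕ) := by
        rw [hcast, Real.rpow_natCast]
      rw [hre]
      have hrw : κ₁/δ^p * ((δ/32)^n * v) * (δ/16 * r^(n-1) * v)
          = C₂ * r^(n-1 : ℕ) := by rw [hC₂def]; try ring
      rw [hrw]
      exact mul_le_mul_of_nonneg_right (min_le_right _ _) (pow_nonneg hr.le _)
    · -- volume of the shell
      have hm : volume A = volume (ball (0:Euc n) r)
          - volume (closedBall (0:Euc n) (r - δ/8)) := by
        rw [hAdef]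
        exact measure_diff (closedBall_subset_ball (by linarith))
          measurableSet_closedBall.nullMeasurableSet measure_closedBall_lt_top.ne
      rw [hm]
      apply ENNReal.le_sub_of_add_le_right measure_closedBall_lt_top.ne
      have h1 : volume (closedBall (0:Euc n) (r - δ/8))
          ≤ ENNReal.ofReal ((r - δ/16)^n) * V := by
        rw [← hvol 0 (r - δ/16) (by linarith)]
        exact measure_mono (closedBall_subset_ball (by linarith))
      have keyreal : δ/16 * r^(n-1) + (r - δ/16)^n ≤ r^n := by
        have hb : (0:ℝ) ≤ r - δ/16 := by linarith
        have h1' : (r - δ/16)^(n-1) ≤ r^(n-1) := pow_le_pow_left₀ hb (by linarith) _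
        have hne' : n - 1 + 1 = n := Nat.succ_pred_eq_of_pos hn
        have h2 : r^n = r^(n-1) * r := by rw [← pow_succ, hne']
        have h3 : (r - δ/16)^n = (r - δ/16)^(n-1) * (r - δ/16) := by
          rw [← pow_succ, hne']
        have h4 : (r - δ/16)^(n-1) * (r - δ/16) ≤ r^(n-1) * (r - δ/16) :=
          mul_le_mul_of_nonneg_right h1' hb
        calc δ/16 * r^(n-1) + (r - δ/16)^n
            = δ/16 * r^(n-1) + (r - δ/16)^(n-1) * (r - δ/16) := by rw [h3]
          _ ≤ δ/16 * r^(n-1) + r^(n-1) * (r - δ/16) := by linarith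
          _ = r^(n-1) * r := by ring
          _ = r^n := h2.symm
      calc ENNReal.ofReal (δ/16 * r^(n-1)) * V + volume (closedBall (0:Euc n) (r - δ/8))
          ≤ ENNReal.ofReal (δ/16 * r^(n-1)) * V + ENNReal.ofReal ((r - δ/16)^n) * V :=
            by gcongr
        _ = (ENNReal.ofReal (δ/16 * r^(n-1)) + ENNReal.ofReal ((r - δ/16)^n)) * V :=
            (add_mul _ _ _).symm
        _ = ENNReal.ofReal (δ/16 * r^(n-1) + (r - δ/16)^n) * V := by
            rw [← ENNReal.ofReal_add (mul_nonneg (by linarith) (pow_nonneg hr.le _))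
              (pow_nonneg (by linarith) n)]
        _ ≤ ENNReal.ofReal (r^n) * V :=
            mul_le_mul_left (ENNReal.ofReal_le_ofReal keyreal) V
        _ = volume (ball (0:Euc n) r) := (hvol 0 r hr.le).symm


end
end
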